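/- arXiv:0810.5203 — 4 statements merged into one kernel-verified Lean document; each statement's English description precedes it below -/
import Mathlib

section
/- Let f be a pmf on Z_+ with finite mean, let X have pmf f, and let α ∈ (0,1]. Then D(T_α(f)) < ∞ if and only if E[X log X] < ∞ (with the convention 0·log 0 = 0). -/
open scoped BigOperators ENNReal Classical
open scoped NNReal
open Filter

/-- `f` is a probability mass function on `ℕ`. -/
def IsPmf (f : ℕ → ℝ) : Prop := (∀ i, 0 ≤ f i) ∧ HasSum f 1

/-- The mean of a pmf on `ℕ`. -/
noncomputable def pmfMean (f : ℕ → ℝ) : ℝ := ∑' i : ℕ, (i : ℝ) * f i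

/-- The Poisson pmf with parameter `lam`. -/
noncomputable def po (lam : ℝ) (i : ℕ) : ℝ := lam ^ i * Real.exp (-lam) / (Nat.factorial i)

/-- The `α`-thinning of a pmf `f`. -/
noncomputable def thin (α : ℝ) (f : ℕ → ℝ) (i : ℕ) : ℝ :=
  ∑' j : ℕ, f j * (Nat.choose j i : ℝ) * α ^ i * (1 - α) ^ (j - i)

/-- Convolution of two pmfs on `ℕ`. -/
def conv (f g : ℕ → ℝ) (i : ℕ) : ℝ := ∑ j ∈ Finset.range (i + 1), f j * g (i - j)

/-- `n`-fold convolution power of a pmf; `convPow f 1 = f`. -/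
def convPow (f : ℕ → ℝ) : ℕ → ℕ → ℝ
  | 0 => fun i => if i = 0 then 1 else 0
  | n + 1 => conv (convPow f n) f

/-- Shannon entropy of a pmf on `ℕ`. -/
noncomputable def ent (f : ℕ → ℝ) : ℝ := -∑' i : ℕ, f i * Real.log (f i)

/-- Relative entropy `D(f | g)`, valued in `ℝ≥0∞`; it is `∞` if the support of `f`
is not contained in that of `g` or if the defining series does not converge. -/
noncomputable def KL (f g : ℕ → ℝ) : ℝ≥0∞ :=
  if (∀ i, g i = 0 → f i = 0) ∧ Summable (fun i : ℕ => f i * Real.log (f i / g i)) then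
    ENNReal.ofReal (∑' i : ℕ, f i * Real.log (f i / g i))
  else ⊤

/-- `D(f) = D(f | po(λ))` where `λ` is the mean of `f`. -/
noncomputable def KLpo (f : ℕ → ℝ) : ℝ≥0∞ := KL f (po (pmfMean f))

/-- The size-biased pmf `S(f)`. -/
noncomputable def sizeBias (f : ℕ → ℝ) (i : ℕ) : ℝ := (i + 1 : ℝ) * f (i + 1) / pmfMean f

noncomputable def bin (α : ℝ) (j i : ℕ) : ℝ := (Nat.choose j i : ℝ) * α ^ i * (1 - α) ^ (j - i)

lemma bin_nonneg {α : ℝ} (h0 : 0 ≤ α) (h1 : α ≤ 1) (j i : ℕ) : 0 ≤ bin α j i := by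
  have h2 : (0:ℝ) ≤ 1 - α := by linarith
  exact mul_nonneg (mul_nonneg (Nat.cast_nonneg _) (pow_nonneg h0 _)) (pow_nonneg h2 _)

lemma bin_eq_zero {α : ℝ} {j i : ℕ} (h : j < i) : bin α j i = 0 := by
  simp [bin, Nat.choose_eq_zero_of_lt h]

lemma bin_sum (α : ℝ) (j : ℕ) : ∑ i ∈ Finset.range (j+1), bin α j i = 1 := by
  have h2 : (α + (1 - α)) = 1 := by ring
  calc ∑ i ∈ Finset.range (j+1), bin α j i
      = ∑ i ∈ Finset.range (j+1), α^i * (1-α)^(j-i) * (Nat.choose j i : ℝ) := by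
        apply Finset.sum_congr rfl; intro i _; simp [bin]; ring
    _ = (α + (1-α))^j := (add_pow α (1-α) j).symm
    _ = 1 := by rw [h2, one_pow]

lemma bin_le_one {α : ℝ} (h0 : 0 ≤ α) (h1 : α ≤ 1) (j i : ℕ) : bin α j i ≤ 1 := by
  rcases lt_or_ge j i with h | h
  · rw [bin_eq_zero h]; norm_num
  · calc bin α j i ≤ ∑ k ∈ Finset.range (j+1), bin α j k := by
          apply Finset.single_le_sum (fun k _ => bin_nonneg h0 h1 j k)
          simp [Finset.mem_range]; omega
      _ = 1 := bin_sum α j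

lemma bin_mean (α : ℝ) (j : ℕ) :
    ∑ i ∈ Finset.range (j+1), (i:ℝ) * bin α j i = α * j := by
  cases j with
  | zero => simp [bin]
  | succ m =>
    rw [Finset.sum_range_succ']
    simp only [Nat.cast_zero, zero_mul, add_zero]
    have key : ∀ k ∈ Finset.range (m+1),
        ((k+1 : ℕ):ℝ) * bin α (m+1) (k+1) = α * (m+1) * bin α m k := by
      intro k hk
      simp only [Finset.mem_range] at hk
      have hc : (m+1) * Nat.choose m k = Nat.choose (m+1) (k+1) * (k+1) :=
        Nat.add_one_mul_choose_eq m k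
      have hc' : ((k:ℝ)+1) * Nat.choose (m+1) (k+1) = ((m:ℝ)+1) * Nat.choose m k := by
        have := congrArg (fun n : ℕ => (n:ℝ)) hc
        push_cast at this
        linarith
      simp only [bin]
      have hsub : (m+1) - (k+1) = m - k := by omega
      rw [hsub]
      push_cast
      calc ((k:ℝ)+1) * ((Nat.choose (m+1) (k+1) : ℝ) * α ^ (k+1) * (1-α) ^ (m-k))
          = (((k:ℝ)+1) * Nat.choose (m+1) (k+1)) * (α ^ (k+1) * (1-α)^(m-k)) := by ring
        _ = (((m:ℝ)+1) * Nat.choose m k) * (α ^ (k+1) * (1-α)^(m-k)) := by rw [hc']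
        _ = α * ((m:ℝ)+1) * ((Nat.choose m k : ℝ) * α ^ k * (1-α)^(m-k)) := by ring
    rw [Finset.sum_congr rfl key, ← Finset.mul_sum, bin_sum]
    push_cast
    ring

lemma summable_iff_ofReal_ne_top {u : ℕ → ℝ} (hu : ∀ i, 0 ≤ u i) :
    Summable u ↔ (∑' i, ENNReal.ofReal (u i)) ≠ ⊤ := by
  set v : ℕ → ℝ≥0 := fun i => ⟨u i, hu i⟩ with hv
  have hcoe : ∀ i, ENNReal.ofReal (u i) = (v i : ℝ≥0∞) := fun i =>
    ENNReal.ofReal_eq_coe_nnreal (hu i)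
  have h1 : Summable u ↔ Summable v := by
    rw [← NNReal.summable_coe]
    rfl
  rw [h1, ← ENNReal.tsum_coe_ne_top_iff_summable]
  congr! 2
  exact funext fun i => (hcoe i).symm

lemma ofReal_tsum {u : ℕ → ℝ} (hu : ∀ i, 0 ≤ u i) (hs : Summable u) :
    ENNReal.ofReal (∑' i, u i) = ∑' i, ENNReal.ofReal (u i) :=
  ENNReal.ofReal_tsum_of_nonneg hu hs

lemma thin_eq (α : ℝ) (f : ℕ → ℝ) (i : ℕ) :
    thin α f i = ∑' j, f j * bin α j i := by
  unfold thin
  apply tsum_congr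
  intro j
  simp [bin]; ring

lemma inner_summable {f : ℕ → ℝ} (hf : IsPmf f) {α : ℝ} (hα : α ∈ Set.Ioc (0:ℝ) 1) (i : ℕ) :
    Summable (fun j => f j * bin α j i) := by
  apply Summable.of_nonneg_of_le
    (fun j => mul_nonneg (hf.1 j) (bin_nonneg (le_of_lt hα.1) hα.2 j i))
    (fun j => ?_) hf.2.summable
  calc f j * bin α j i ≤ f j * 1 :=
        mul_le_mul_of_nonneg_left (bin_le_one (le_of_lt hα.1) hα.2 j i) (hf.1 j)
    _ = f j := mul_one _

lemma thin_nonneg {f : ℕ → ℝ} (hf : IsPmf f) {α : ℝ} (hα : α ∈ Set.Ioc (0:ℝ) 1) (i : ℕ) :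
    0 ≤ thin α f i := by
  rw [thin_eq]
  exact tsum_nonneg fun j => mul_nonneg (hf.1 j) (bin_nonneg (le_of_lt hα.1) hα.2 j i)

lemma thin_le_one {f : ℕ → ℝ} (hf : IsPmf f) {α : ℝ} (hα : α ∈ Set.Ioc (0:ℝ) 1) (i : ℕ) :
    thin α f i ≤ 1 := by
  rw [thin_eq]
  have h1 : (∑' j, f j) = 1 := hf.2.tsum_eq
  calc (∑' j, f j * bin α j i) ≤ ∑' j, f j := by
        apply Summable.tsum_le_tsum _ (inner_summable hf hα i) hf.2.summable
        intro j
        calc f j * bin α j i ≤ f j * 1 :=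
              mul_le_mul_of_nonneg_left (bin_le_one (le_of_lt hα.1) hα.2 j i) (hf.1 j)
          _ = f j := mul_one _
    _ = 1 := h1

lemma thin_tonelli {f : ℕ → ℝ} (hf : IsPmf f) {α : ℝ} (hα : α ∈ Set.Ioc (0:ℝ) 1)
    (c : ℕ → ℝ) (hc : ∀ i, 0 ≤ c i) :
    ∑' i, ENNReal.ofReal (thin α f i * c i)
      = ∑' j, ENNReal.ofReal (f j * ∑ i ∈ Finset.range (j+1), bin α j i * c i) := by
  have h0α : 0 ≤ α := le_of_lt hα.1
  have hbnn : ∀ j i, 0 ≤ bin α j i := fun j i => bin_nonneg h0α hα.2 j i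
  have step1 : ∀ i, ENNReal.ofReal (thin α f i * c i)
      = ∑' j, ENNReal.ofReal (f j * bin α j i * c i) := by
    intro i
    rw [ENNReal.ofReal_mul (thin_nonneg hf hα i), thin_eq,
      ofReal_tsum (fun j => mul_nonneg (hf.1 j) (hbnn j i)) (inner_summable hf hα i),
      ← ENNReal.tsum_mul_right]
    apply tsum_congr
    intro j
    rw [← ENNReal.ofReal_mul (mul_nonneg (hf.1 j) (hbnn j i))]
  calc ∑' i, ENNReal.ofReal (thin α f i * c i)
      = ∑' i, ∑' j, ENNReal.ofReal (f j * bin α j i * c i) := tsum_congr step1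
    _ = ∑' j, ∑' i, ENNReal.ofReal (f j * bin α j i * c i) := ENNReal.tsum_comm
    _ = ∑' j, ENNReal.ofReal (f j * ∑ i ∈ Finset.range (j+1), bin α j i * c i) := by
        apply tsum_congr
        intro j
        have hre : ∀ i, ENNReal.ofReal (f j * bin α j i * c i)
            = ENNReal.ofReal (f j) * ENNReal.ofReal (bin α j i * c i) := by
          intro i
          rw [mul_assoc, ENNReal.ofReal_mul (hf.1 j)]
        rw [tsum_congr hre, ENNReal.tsum_mul_left]
        have hfin : ∑' i, ENNReal.ofReal (bin α j i * c i)
            = ∑ i ∈ Finset.range (j+1), ENNReal.ofReal (bin α j i * c i) := by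
          apply tsum_eq_sum
          intro i hi
          simp only [Finset.mem_range, not_lt] at hi
          rw [bin_eq_zero (by omega), zero_mul, ENNReal.ofReal_zero]
        rw [hfin, ← ENNReal.ofReal_sum_of_nonneg (fun i _ => mul_nonneg (hbnn j i) (hc i)),
          ← ENNReal.ofReal_mul (hf.1 j)]

lemma thin_summable {f : ℕ → ℝ} (hf : IsPmf f) {α : ℝ} (hα : α ∈ Set.Ioc (0:ℝ) 1) :
    Summable (thin α f) := by
  have h := thin_tonelli hf hα (fun _ => 1) (fun _ => zero_le_one)
  simp only [mul_one, bin_sum] at h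
  refine (summable_iff_ofReal_ne_top (fun i => thin_nonneg hf hα i)).2 ?_
  rw [h]
  exact (summable_iff_ofReal_ne_top hf.1).1 hf.2.summable

lemma thin_mean_tonelli {f : ℕ → ℝ} (hf : IsPmf f) {α : ℝ} (hα : α ∈ Set.Ioc (0:ℝ) 1)
    (hmean : Summable (fun i : ℕ => (i : ℝ) * f i)) :
    ∑' i, ENNReal.ofReal (thin α f i * (i:ℝ)) = ENNReal.ofReal (α * pmfMean f) := by
  have h0α : 0 ≤ α := le_of_lt hα.1
  have h := thin_tonelli hf hα (fun i => (i:ℝ)) (fun i => Nat.cast_nonneg i)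
  have h2 : ∀ j:ℕ, ∑ i ∈ Finset.range (j+1), bin α j i * (i:ℝ) = α * j := by
    intro j
    rw [← bin_mean α j]
    apply Finset.sum_congr rfl
    intros; ring
  simp only [h2] at h
  rw [h]
  have hs : Summable (fun j : ℕ => f j * (α * j)) := by
    have he : (fun j:ℕ => f j * (α * (j:ℝ))) = fun j : ℕ => α * ((j:ℝ) * f j) := by
      funext j; ring
    rw [he]; exact hmean.mul_left α
  rw [← ofReal_tsum (fun j => mul_nonneg (hf.1 j) (mul_nonneg h0α (Nat.cast_nonneg j))) hs]
  congr 1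
  calc ∑' j : ℕ, f j * (α * j) = ∑' j : ℕ, α * ((j:ℝ) * f j) := tsum_congr (by intro j; ring)
    _ = α * ∑' j : ℕ, (j:ℝ) * f j := tsum_mul_left
    _ = α * pmfMean f := rfl

lemma thin_mean_summable {f : ℕ → ℝ} (hf : IsPmf f) {α : ℝ} (hα : α ∈ Set.Ioc (0:ℝ) 1)
    (hmean : Summable (fun i : ℕ => (i : ℝ) * f i)) :
    Summable (fun i : ℕ => (i:ℝ) * thin α f i) := by
  have hnn : ∀ i : ℕ, 0 ≤ thin α f i * (i:ℝ) :=
    fun i => mul_nonneg (thin_nonneg hf hα i) (Nat.cast_nonneg i)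
  have h : Summable (fun i : ℕ => thin α f i * (i:ℝ)) := by
    rw [summable_iff_ofReal_ne_top hnn, thin_mean_tonelli hf hα hmean]
    exact ENNReal.ofReal_ne_top
  have he : (fun i : ℕ => (i:ℝ) * thin α f i) = fun i => thin α f i * (i:ℝ) := by
    funext i; ring
  rw [he]; exact h

lemma thin_mean {f : ℕ → ℝ} (hf : IsPmf f) {α : ℝ} (hα : α ∈ Set.Ioc (0:ℝ) 1)
    (hmean : Summable (fun i : ℕ => (i : ℝ) * f i)) :
    pmfMean (thin α f) = α * pmfMean f := by
  have hnn : ∀ i : ℕ, 0 ≤ thin α f i * (i:ℝ) :=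
    fun i => mul_nonneg (thin_nonneg hf hα i) (Nat.cast_nonneg i)
  have hs : Summable (fun i : ℕ => thin α f i * (i:ℝ)) := by
    rw [summable_iff_ofReal_ne_top hnn, thin_mean_tonelli hf hα hmean]
    exact ENNReal.ofReal_ne_top
  have heq : ENNReal.ofReal (∑' i, thin α f i * (i:ℝ)) = ENNReal.ofReal (α * pmfMean f) := by
    rw [ofReal_tsum hnn hs, thin_mean_tonelli hf hα hmean]
  have hmnn : 0 ≤ α * pmfMean f :=
    mul_nonneg (le_of_lt hα.1)
      (tsum_nonneg fun i => mul_nonneg (Nat.cast_nonneg i) (hf.1 i))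
  have h2 := (ENNReal.ofReal_eq_ofReal_iff (tsum_nonneg hnn) hmnn).1 heq
  calc pmfMean (thin α f) = ∑' i, thin α f i * (i:ℝ) := tsum_congr fun i => mul_comm _ _
    _ = α * pmfMean f := h2

lemma xlogx_nonneg (i : ℕ) : 0 ≤ (i:ℝ) * Real.log i := by
  rcases Nat.eq_zero_or_pos i with h | h
  · simp [h]
  · have h1 : (1:ℝ) ≤ i := by exact_mod_cast h
    exact mul_nonneg (by positivity) (Real.log_nonneg h1)

lemma xlogx_tangent {x t : ℝ} (hx : 0 ≤ x) (ht : 0 < t) :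
    x * Real.log t + x - t ≤ x * Real.log x := by
  rcases eq_or_lt_of_le hx with h | h
  · rw [← h]; simp; linarith
  · have h1 : Real.log (t / x) ≤ t / x - 1 := Real.log_le_sub_one_of_pos (div_pos ht h)
    have h2 : Real.log (t/x) = Real.log t - Real.log x := Real.log_div (ne_of_gt ht) (ne_of_gt h)
    have h3 : x * Real.log (t/x) ≤ x * (t/x - 1) := mul_le_mul_of_nonneg_left h1 hx
    have h4 : x * (t/x - 1) = t - x := by field_simp
    rw [h2, h4] at h3
    nlinarith

lemma Ej_le {α : ℝ} (h0 : 0 ≤ α) (h1 : α ≤ 1) (j : ℕ) :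
    ∑ i ∈ Finset.range (j+1), bin α j i * ((i:ℝ) * Real.log i) ≤ α * j * Real.log j := by
  have step : ∀ i ∈ Finset.range (j+1),
      bin α j i * ((i:ℝ)*Real.log i) ≤ bin α j i * ((i:ℝ) * Real.log j) := by
    intro i hi
    simp only [Finset.mem_range] at hi
    apply mul_le_mul_of_nonneg_left _ (bin_nonneg h0 h1 j i)
    rcases Nat.eq_zero_or_pos i with h | h
    · simp [h]
    · apply mul_le_mul_of_nonneg_left _ (Nat.cast_nonneg i)
      exact Real.log_le_log (by exact_mod_cast h) (by exact_mod_cast (by omega : i ≤ j))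
  calc ∑ i ∈ Finset.range (j+1), bin α j i * ((i:ℝ) * Real.log i)
      ≤ ∑ i ∈ Finset.range (j+1), bin α j i * ((i:ℝ) * Real.log j) := Finset.sum_le_sum step
    _ = Real.log j * ∑ i ∈ Finset.range (j+1), (i:ℝ) * bin α j i := by
        rw [Finset.mul_sum]
        apply Finset.sum_congr rfl
        intros; ring
    _ = Real.log j * (α * j) := by rw [bin_mean]
    _ = α * j * Real.log j := by ring

lemma Ej_ge {α : ℝ} (hα : α ∈ Set.Ioc (0:ℝ) 1) (j : ℕ) :
    α * j * Real.log j + (α * Real.log α) * j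
      ≤ ∑ i ∈ Finset.range (j+1), bin α j i * ((i:ℝ) * Real.log i) := by
  rcases Nat.eq_zero_or_pos j with hj | hj
  · subst hj; simp [bin]
  · have hjpos : (0:ℝ) < j := by exact_mod_cast hj
    have ht : 0 < α * j := mul_pos hα.1 hjpos
    have step : ∀ i ∈ Finset.range (j+1),
        bin α j i * ((i:ℝ)*Real.log (α*j) + (i:ℝ) - α*j) ≤ bin α j i * ((i:ℝ) * Real.log i) :=
      fun i _ => mul_le_mul_of_nonneg_left (xlogx_tangent (Nat.cast_nonneg i) ht)
        (bin_nonneg (le_of_lt hα.1) hα.2 j i)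
    have key := Finset.sum_le_sum step
    have e1 : ∑ i ∈ Finset.range (j+1), bin α j i * ((i:ℝ)*Real.log (α*j) + (i:ℝ) - α*j)
        = Real.log (α*j) * (α*j) + (α*j) - (α*j) * 1 := by
      have expand : ∀ i ∈ Finset.range (j+1),
          bin α j i * ((i:ℝ)*Real.log (α*j) + (i:ℝ) - α*j)
          = Real.log (α*j) * ((i:ℝ) * bin α j i) + (i:ℝ) * bin α j i - (α*j) * bin α j i := by
        intros; ring
      rw [Finset.sum_congr rfl expand]
      rw [Finset.sum_sub_distrib, Finset.sum_add_distrib, ← Finset.mul_sum, ← Finset.mul_sum,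
        bin_mean, bin_sum]
    have e2 : Real.log (α*j) = Real.log α + Real.log j :=
      Real.log_mul (ne_of_gt hα.1) (ne_of_gt hjpos)
    rw [e1, e2] at key
    nlinarith [key]

lemma thin_xlogx_summable_iff {f : ℕ → ℝ} (hf : IsPmf f) {α : ℝ} (hα : α ∈ Set.Ioc (0:ℝ) 1)
    (hmean : Summable (fun i : ℕ => (i : ℝ) * f i)) :
    Summable (fun i => thin α f i * ((i:ℝ) * Real.log i))
      ↔ Summable (fun j => f j * ((j:ℝ) * Real.log j)) := by
  have h0α : 0 ≤ α := le_of_lt hα.1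
  set E : ℕ → ℝ := fun j => ∑ i ∈ Finset.range (j+1), bin α j i * ((i:ℝ)*Real.log i) with hE
  have hE0 : ∀ j, 0 ≤ E j := fun j =>
    Finset.sum_nonneg fun i _ => mul_nonneg (bin_nonneg h0α hα.2 j i) (xlogx_nonneg i)
  have h := thin_tonelli hf hα (fun i => (i:ℝ)*Real.log i) xlogx_nonneg
  have hiff1 : Summable (fun i => thin α f i * ((i:ℝ)*Real.log i))
      ↔ Summable (fun j => f j * E j) := by
    rw [summable_iff_ofReal_ne_top
        (fun i => mul_nonneg (thin_nonneg hf hα i) (xlogx_nonneg i)), h,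
      ← summable_iff_ofReal_ne_top (fun j => mul_nonneg (hf.1 j) (hE0 j))]
  rw [hiff1]
  constructor
  · intro hs
    rw [← summable_mul_left_iff (ne_of_gt hα.1)]
    have hs2 : Summable (fun j => f j * E j - (α * Real.log α) * ((j:ℝ) * f j)) :=
      hs.sub (hmean.mul_left _)
    apply Summable.of_nonneg_of_le
      (fun j => mul_nonneg h0α (mul_nonneg (hf.1 j) (xlogx_nonneg j))) _ hs2
    intro j
    have hEg := Ej_ge hα j
    have h1 := mul_le_mul_of_nonneg_left hEg (hf.1 j)
    nlinarith [h1]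
  · intro hs
    apply Summable.of_nonneg_of_le (fun j => mul_nonneg (hf.1 j) (hE0 j)) _ (hs.mul_left α)
    intro j
    have hEl := Ej_le h0α hα.2 j
    have h1 := mul_le_mul_of_nonneg_left hEl (hf.1 j)
    nlinarith [h1]

lemma log_factorial_le (n : ℕ) : Real.log (Nat.factorial n) ≤ (n:ℝ) * Real.log n := by
  have h : ((Nat.factorial n : ℕ):ℝ) ≤ ((n:ℝ))^n := by exact_mod_cast Nat.factorial_le_pow n
  have hpos : (0:ℝ) < Nat.factorial n := by exact_mod_cast Nat.factorial_pos n
  calc Real.log (Nat.factorial n) ≤ Real.log ((n:ℝ)^n) := Real.log_le_log hpos h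
    _ = (n:ℝ) * Real.log n := Real.log_pow n n

lemma log_factorial_nonneg (n : ℕ) : 0 ≤ Real.log (Nat.factorial n) := by
  apply Real.log_nonneg
  exact_mod_cast Nat.one_le_iff_ne_zero.2 (Nat.factorial_pos n).ne'

lemma le_log_factorial (n : ℕ) : (n:ℝ) * Real.log n - n ≤ Real.log (Nat.factorial n) := by
  induction n with
  | zero => simp
  | succ m ih =>
    have hfpos : (0:ℝ) < Nat.factorial m := by exact_mod_cast Nat.factorial_pos m
    have hfact : Real.log (Nat.factorial (m+1))
        = Real.log ((m:ℝ)+1) + Real.log (Nat.factorial m) := by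
      rw [Nat.factorial_succ]
      push_cast
      rw [Real.log_mul (by positivity) (ne_of_gt hfpos)]
    have key : (m:ℝ) * Real.log ((m:ℝ)+1) ≤ (m:ℝ) * Real.log m + 1 := by
      rcases Nat.eq_zero_or_pos m with h | h
      · subst h; simp
      · have hm : (0:ℝ) < m := by exact_mod_cast h
        have h1 : Real.log (((m:ℝ)+1)/m) ≤ ((m:ℝ)+1)/m - 1 :=
          Real.log_le_sub_one_of_pos (by positivity)
        have h2 : Real.log (((m:ℝ)+1)/m) = Real.log ((m:ℝ)+1) - Real.log m :=
          Real.log_div (by positivity) (ne_of_gt hm)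
        have h3 : ((m:ℝ)+1)/m - 1 = 1/m := by field_simp; ring
        rw [h2, h3] at h1
        have h4 := mul_le_mul_of_nonneg_left h1 (le_of_lt hm)
        have h5 : (m:ℝ) * (1/m) = 1 := by field_simp
        nlinarith
    rw [hfact]
    push_cast
    nlinarith [ih, key]

lemma summable_mul_log_self {g : ℕ → ℝ} (h0 : ∀ i, 0 ≤ g i) (h1 : ∀ i, g i ≤ 1)
    (hs : Summable g) (hm : Summable (fun i : ℕ => (i:ℝ) * g i)) :
    Summable (fun i : ℕ => g i * Real.log (g i)) := by
  have hbound : ∀ i : ℕ, |g i * Real.log (g i)|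
      ≤ (1/2:ℝ)^(i+1) + Real.log 2 * (((i:ℝ)+1) * g i) := by
    intro i
    have hq : (0:ℝ) < (1/2:ℝ)^(i+1) := by positivity
    have hl2 : (0:ℝ) ≤ Real.log 2 := Real.log_nonneg (by norm_num)
    rcases eq_or_lt_of_le (h0 i) with h | h
    · rw [← h]; simp
    · have hlogle : Real.log (g i) ≤ 0 := Real.log_nonpos (h0 i) (h1 i)
      have habs : |g i * Real.log (g i)| = -(g i * Real.log (g i)) :=
        abs_of_nonpos (mul_nonpos_of_nonneg_of_nonpos (h0 i) hlogle)
      rw [habs]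
      have hkey : Real.log ((1/2:ℝ)^(i+1) / g i) ≤ (1/2:ℝ)^(i+1)/(g i) - 1 :=
        Real.log_le_sub_one_of_pos (by positivity)
      have hd : Real.log ((1/2:ℝ)^(i+1) / g i)
          = Real.log ((1/2:ℝ)^(i+1)) - Real.log (g i) :=
        Real.log_div (ne_of_gt hq) (ne_of_gt h)
      have hq2 : Real.log ((1/2:ℝ)^(i+1)) = -(((i:ℝ)+1) * Real.log 2) := by
        rw [Real.log_pow]
        push_cast
        rw [one_div, Real.log_inv]
        ring
      rw [hd, hq2] at hkey
      have h6 := mul_le_mul_of_nonneg_left hkey (le_of_lt h)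
      have h7 : g i * ((1/2:ℝ)^(i+1)/(g i) - 1) = (1/2:ℝ)^(i+1) - g i := by
        field_simp
      nlinarith [h0 i]
  apply Summable.of_abs
  apply Summable.of_nonneg_of_le (fun i => abs_nonneg _) hbound
  apply Summable.add
  · have hgeo : Summable (fun i : ℕ => (1/2:ℝ)^i * (1/2)) := summable_geometric_two.mul_right _
    apply hgeo.congr
    intro i
    rw [← pow_succ]
  · apply Summable.mul_left
    have : Summable (fun i : ℕ => (i:ℝ) * g i + g i) := hm.add hs
    apply this.congr
    intro i; ring

lemma po_pos {μ : ℝ} (hμ : 0 < μ) (i : ℕ) : 0 < po μ i := by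
  unfold po
  have : (0:ℝ) < Nat.factorial i := by exact_mod_cast Nat.factorial_pos i
  positivity

lemma KL_summand_decomp {g : ℕ → ℝ} (h0 : ∀ i, 0 ≤ g i) {μ : ℝ} (hμ : 0 < μ) (i : ℕ) :
    g i * Real.log (g i / po μ i)
      = (g i * Real.log (g i) + μ * g i - Real.log μ * ((i:ℝ) * g i))
        + g i * Real.log (Nat.factorial i) := by
  have hpo : 0 < po μ i := po_pos hμ i
  have hfpos : (0:ℝ) < Nat.factorial i := by exact_mod_cast Nat.factorial_pos i
  rcases eq_or_lt_of_le (h0 i) with h | h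
  · rw [← h]; simp
  · rw [Real.log_div (ne_of_gt h) (ne_of_gt hpo)]
    unfold po
    rw [Real.log_div (by positivity) (ne_of_gt hfpos),
      Real.log_mul (by positivity) (Real.exp_ne_zero _), Real.log_pow, Real.log_exp]
    ring

lemma KL_summable_iff {f : ℕ → ℝ} (hf : IsPmf f) {α : ℝ} (hα : α ∈ Set.Ioc (0:ℝ) 1)
    (hmean : Summable (fun i : ℕ => (i : ℝ) * f i)) (hμ : 0 < pmfMean (thin α f)) :
    Summable (fun i : ℕ =>
        thin α f i * Real.log (thin α f i / po (pmfMean (thin α f)) i))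
      ↔ Summable (fun i : ℕ => thin α f i * ((i:ℝ) * Real.log i)) := by
  set g := thin α f with hg
  set μ := pmfMean g with hμdef
  have hg0 : ∀ i, 0 ≤ g i := thin_nonneg hf hα
  have hgs : Summable g := thin_summable hf hα
  have hgm : Summable (fun i : ℕ => (i:ℝ) * g i) := thin_mean_summable hf hα hmean
  have hA : Summable (fun i : ℕ =>
      g i * Real.log (g i) + μ * g i - Real.log μ * ((i:ℝ)*g i)) :=
    ((summable_mul_log_self hg0 (thin_le_one hf hα) hgs hgm).add (hgs.mul_left μ)).sub
      (hgm.mul_left _)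
  have hdecomp : ∀ i : ℕ, g i * Real.log (g i / po μ i)
      = (g i * Real.log (g i) + μ * g i - Real.log μ * ((i:ℝ)*g i))
        + g i * Real.log (Nat.factorial i) := fun i => KL_summand_decomp hg0 hμ i
  constructor
  · intro hs
    have hlf : Summable (fun i : ℕ => g i * Real.log (Nat.factorial i)) := by
      apply (hs.sub hA).congr
      intro i
      rw [hdecomp i]
      ring
    apply Summable.of_nonneg_of_le (fun i => mul_nonneg (hg0 i) (xlogx_nonneg i)) _
      (hlf.add hgm)
    intro i
    have h1 := mul_le_mul_of_nonneg_left (le_log_factorial i) (hg0 i)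
    nlinarith [h1]
  · intro hs
    have hlf : Summable (fun i : ℕ => g i * Real.log (Nat.factorial i)) := by
      apply Summable.of_nonneg_of_le
        (fun i => mul_nonneg (hg0 i) (log_factorial_nonneg i)) _ hs
      intro i
      exact mul_le_mul_of_nonneg_left (log_factorial_le i) (hg0 i)
    exact (hA.add hlf).congr (fun i => (hdecomp i).symm)


/-- For a pmf `f` on `ℕ` with finite mean and `α ∈ (0,1]`, `D(T_α(f)) < ∞` if and only if
`E[X log X] < ∞` where `X` has pmf `f` (with the convention `0·log 0 = 0`). -/
theorem relEntropy_thin_lt_top_iff (f : ℕ → ℝ) (hf : IsPmf f)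
    (hmean : Summable (fun i : ℕ => (i : ℝ) * f i))
    (α : ℝ) (hα : α ∈ Set.Ioc (0 : ℝ) 1) :
    KLpo (thin α f) < ⊤ ↔ Summable (fun i : ℕ => f i * ((i : ℝ) * Real.log i)) := by
  have hlam0 : 0 ≤ pmfMean f :=
    tsum_nonneg fun i => mul_nonneg (Nat.cast_nonneg i) (hf.1 i)
  rcases eq_or_lt_of_le hlam0 with hlam | hlam
  · -- degenerate case: mean zero, f = δ₀
    have hzero : ∀ i : ℕ, (i:ℝ) * f i = 0 := by
      intro i
      have hle := Summable.le_tsum hmean i (fun j _ => mul_nonneg (Nat.cast_nonneg j) (hf.1 j))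
      have hge : 0 ≤ (i:ℝ) * f i := mul_nonneg (Nat.cast_nonneg i) (hf.1 i)
      have : (∑' j : ℕ, (j:ℝ) * f j) = 0 := hlam.symm
      rw [this] at hle
      linarith
    have hf0 : ∀ i : ℕ, i ≠ 0 → f i = 0 := by
      intro i hi
      have hcast : (i:ℝ) ≠ 0 := Nat.cast_ne_zero.2 hi
      rcases mul_eq_zero.1 (hzero i) with h | h
      · exact absurd h hcast
      · exact h
    have hf01 : f 0 = 1 := by
      have := hf.2.tsum_eq
      rw [tsum_eq_single 0 (fun j hj => hf0 j hj)] at this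
      exact this
    have hgδ : ∀ i : ℕ, i ≠ 0 → thin α f i = 0 := by
      intro i hi
      rw [thin_eq]
      have hz : ∀ j : ℕ, f j * bin α j i = 0 := by
        intro j
        rcases Nat.eq_zero_or_pos j with hj | hj
        · subst hj
          rw [bin_eq_zero (by omega)]
          ring
        · rw [hf0 j (by omega)]
          ring
      rw [tsum_congr hz, tsum_zero]
    have hg1 : thin α f 0 = 1 := by
      rw [thin_eq]
      rw [tsum_eq_single 0 (fun j hj => by rw [hf0 j hj]; ring)]
      simp [bin, hf01]
    have hμ0 : pmfMean (thin α f) = 0 := by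
      unfold pmfMean
      have hz : ∀ i : ℕ, (i:ℝ) * thin α f i = 0 := by
        intro i
        rcases Nat.eq_zero_or_pos i with hi | hi
        · subst hi; simp
        · rw [hgδ i (by omega)]; ring
      rw [tsum_congr hz, tsum_zero]
    have hpo0 : po 0 0 = 1 := by simp [po]
    have hsummand : ∀ i : ℕ,
        thin α f i * Real.log (thin α f i / po (pmfMean (thin α f)) i) = 0 := by
      intro i
      rcases Nat.eq_zero_or_pos i with hi | hi
      · subst hi
        rw [hμ0, hg1, hpo0]
        simp
      · rw [hgδ i (by omega)]
        ring
    have hKL : KLpo (thin α f) < ⊤ := by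
      unfold KLpo KL
      rw [if_pos]
      · exact ENNReal.ofReal_lt_top
      constructor
      · intro i hpoi
        rcases Nat.eq_zero_or_pos i with hi | hi
        · exfalso
          rw [hμ0] at hpoi
          subst hi
          rw [hpo0] at hpoi
          norm_num at hpoi
        · exact hgδ i (by omega)
      · exact summable_zero.congr (fun i => (hsummand i).symm)
    have hRHS : Summable (fun i : ℕ => f i * ((i:ℝ) * Real.log i)) := by
      apply summable_zero.congr
      intro i
      rcases Nat.eq_zero_or_pos i with hi | hi
      · subst hi; simp
      · rw [hf0 i (by omega)]; ring
    exact iff_of_true hKL hRHS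
  · -- main case: positive mean
    have hμ : 0 < pmfMean (thin α f) := by
      rw [thin_mean hf hα hmean]
      exact mul_pos hα.1 hlam
    have hsupp : ∀ i : ℕ, po (pmfMean (thin α f)) i = 0 → thin α f i = 0 :=
      fun i h => absurd h (ne_of_gt (po_pos hμ i))
    have key : KLpo (thin α f) < ⊤ ↔ Summable (fun i : ℕ =>
        thin α f i * Real.log (thin α f i / po (pmfMean (thin α f)) i)) := by
      unfold KLpo KL
      split_ifs with h
      · exact iff_of_true ENNReal.ofReal_lt_top h.2
      · exact iff_of_false (lt_irrefl ⊤) (fun hs => h ⟨hsupp, hs⟩)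
    rw [key, KL_summable_iff hf hα hmean hμ, thin_xlogx_summable_iff hf hα hmean]
end

section
/- Let f be a pmf on Z_+ with mean λ ∈ (0,∞), and let X_1, X_2, ... be i.i.d. with pmf f; write X̄_n = (1/n)Σ_{i=1}^n X_i. Then for every n ≥ 1, D(T_{1/n}(f^{*n})) ≤ λ/n + E[X̄_n log(X̄_n/λ)] (with the convention 0·log 0 = 0). -/
open scoped BigOperators ENNReal Classical
open Filter

/-- The summand of `E[X̄_n log(X̄_n/λ)]` where `X̄_n` is the sample mean of `n` i.i.d.
variables with pmf `f` (so that `n·X̄_n` has pmf `f^{*n}`); the convention `0·log 0 = 0`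
holds since `Real.log 0 = 0`. -/
noncomputable def lTerm (f : ℕ → ℝ) (lam : ℝ) (n : ℕ) (k : ℕ) : ℝ :=
  convPow f n k * ((k : ℝ) / n * Real.log ((k : ℝ) / (n * lam)))

/-- `l_n = E[X̄_n log(X̄_n/λ)]` as an extended nonnegative real, `∞` if the series fails
to converge. -/
noncomputable def lSeq (f : ℕ → ℝ) (lam : ℝ) (n : ℕ) : ℝ≥0∞ :=
  if Summable (lTerm f lam n) then ENNReal.ofReal (∑' k : ℕ, lTerm f lam n k) else ⊤

/- ## Auxiliary material -/

noncomputable def phiD (x y : ℝ) : ℝ := x * Real.log (x / y) - x + y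

lemma phiD_zero (y : ℝ) : phiD 0 y = y := by simp [phiD]

lemma phiD_nonneg {x y : ℝ} (hx : 0 ≤ x) (hy : 0 < y) : 0 ≤ phiD x y := by
  rcases eq_or_lt_of_le hx with h | h
  · simp [phiD, ← h]; linarith
  · have hlog : Real.log (y / x) ≤ y / x - 1 :=
      Real.log_le_sub_one_of_pos (by positivity)
    have hd : Real.log (x / y) = Real.log x - Real.log y :=
      Real.log_div h.ne' hy.ne'
    have hd2 : Real.log (y / x) = Real.log y - Real.log x :=
      Real.log_div hy.ne' h.ne'
    rw [hd2] at hlog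
    have h2 : x * (Real.log y - Real.log x) ≤ x * (y / x - 1) :=
      mul_le_mul_of_nonneg_left hlog hx
    have h3 : x * (y / x - 1) = y - x := by field_simp
    unfold phiD
    rw [hd]
    nlinarith

lemma phiD_tangent {x g y : ℝ} (hx : 0 ≤ x) (hg : 0 < g) (hy : 0 < y) :
    phiD g y + Real.log (g / y) * (x - g) ≤ phiD x y := by
  rcases eq_or_lt_of_le hx with h | h
  · rw [← h, phiD_zero]
    unfold phiD
    ring_nf
    nlinarith [hg.le]
  · have key : 0 ≤ phiD x g := phiD_nonneg hx hg
    unfold phiD at key ⊢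
    rw [Real.log_div h.ne' hg.ne'] at key
    rw [Real.log_div h.ne' hy.ne', Real.log_div hg.ne' hy.ne']
    nlinarith

lemma summable_ofReal_ne_top {f : ℕ → ℝ} (hf : ∀ i, 0 ≤ f i)
    (h : (∑' i, ENNReal.ofReal (f i)) ≠ ⊤) : Summable f := by
  have := ENNReal.summable_toReal h
  exact this.congr fun i => ENNReal.toReal_ofReal (hf i)

lemma tsum_eq_of_ofReal_tsum {f : ℕ → ℝ} {c : ℝ} (hf : ∀ i, 0 ≤ f i) (hc : 0 ≤ c)
    (hsum : Summable f) (h : (∑' i, ENNReal.ofReal (f i)) = ENNReal.ofReal c) :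
    ∑' i, f i = c := by
  rw [← ENNReal.ofReal_tsum_of_nonneg hf hsum] at h
  exact (ENNReal.ofReal_eq_ofReal_iff (tsum_nonneg hf) hc).mp h

noncomputable def binp (p : ℝ) (k i : ℕ) : ℝ := (k.choose i : ℝ) * p ^ i * (1 - p) ^ (k - i)

lemma binp_nonneg {p : ℝ} (hp0 : 0 ≤ p) (hp1 : p ≤ 1) (k i : ℕ) : 0 ≤ binp p k i := by
  have h1 : (0:ℝ) ≤ 1 - p := by linarith
  exact mul_nonneg (mul_nonneg (Nat.cast_nonneg _) (pow_nonneg hp0 _)) (pow_nonneg h1 _)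

lemma binp_eq_zero {p : ℝ} {k i : ℕ} (h : k < i) : binp p k i = 0 := by
  simp [binp, Nat.choose_eq_zero_of_lt h]

lemma sum_binp (p : ℝ) (k : ℕ) : ∑ i ∈ Finset.range (k + 1), binp p k i = 1 := by
  have h := add_pow p (1 - p) k
  have h2 : ∑ i ∈ Finset.range (k + 1), binp p k i
      = ∑ i ∈ Finset.range (k + 1), p ^ i * (1 - p) ^ (k - i) * (k.choose i : ℝ) := by
    refine Finset.sum_congr rfl fun i _ => ?_
    unfold binp; ring
  rw [h2, ← h]
  norm_num

lemma binp_le_one {p : ℝ} (hp0 : 0 ≤ p) (hp1 : p ≤ 1) (k i : ℕ) : binp p k i ≤ 1 := by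
  rcases lt_or_ge k i with h | h
  · rw [binp_eq_zero h]; norm_num
  · calc binp p k i ≤ ∑ j ∈ Finset.range (k + 1), binp p k j :=
        Finset.single_le_sum (fun j _ => binp_nonneg hp0 hp1 k j)
          (Finset.mem_range.mpr (Nat.lt_succ_of_le h))
    _ = 1 := sum_binp p k

lemma sum_mul_binp (p : ℝ) (k : ℕ) :
    ∑ i ∈ Finset.range (k + 1), (i : ℝ) * binp p k i = k * p := by
  have h := bernsteinPolynomial.sum_smul ℝ k
  have h2 := congrArg (Polynomial.eval p) h
  rw [Polynomial.eval_finset_sum] at h2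
  simp only [Polynomial.eval_smul, bernsteinPolynomial, Polynomial.eval_mul,
    Polynomial.eval_pow, Polynomial.eval_natCast, Polynomial.eval_sub, Polynomial.eval_one,
    Polynomial.eval_X, smul_eq_mul, nsmul_eq_mul] at h2
  rw [← h2]
  refine Finset.sum_congr rfl fun i _ => ?_
  unfold binp; ring

lemma hasSum_po {lam : ℝ} (h : 0 < lam) : HasSum (po lam) 1 := by
  have := ProbabilityTheory.poissonPMFRealSum lam.toNNReal
  refine this.congr_fun fun i => ?_
  unfold po
  rw [Real.coe_toNNReal _ h.le]
  ring

lemma po_pos_s8 {lam : ℝ} (h : 0 < lam) (i : ℕ) : 0 < po lam i := by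
  unfold po
  positivity

section convfacts

variable {a b : ℕ → ℝ}

lemma summable_norm_of_nonneg {f : ℕ → ℝ} (h0 : ∀ i, 0 ≤ f i) (hs : Summable f) :
    Summable fun i => ‖f i‖ :=
  hs.congr fun i => (Real.norm_of_nonneg (h0 i)).symm

lemma conv_summable (h0a : ∀ i, 0 ≤ a i) (h0b : ∀ i, 0 ≤ b i)
    (ha : Summable a) (hb : Summable b) : Summable (conv a b) := by
  have := summable_norm_sum_mul_range_of_summable_norm
    (summable_norm_of_nonneg h0a ha) (summable_norm_of_nonneg h0b hb)
  exact this.of_norm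

lemma conv_tsum (h0a : ∀ i, 0 ≤ a i) (h0b : ∀ i, 0 ≤ b i)
    (ha : Summable a) (hb : Summable b) :
    ∑' i, conv a b i = (∑' i, a i) * (∑' i, b i) := by
  exact (tsum_mul_tsum_eq_tsum_sum_range_of_summable_norm
    (summable_norm_of_nonneg h0a ha) (summable_norm_of_nonneg h0b hb)).symm

lemma conv_nonneg (h0a : ∀ i, 0 ≤ a i) (h0b : ∀ i, 0 ≤ b i) (i : ℕ) : 0 ≤ conv a b i :=
  Finset.sum_nonneg fun j _ => mul_nonneg (h0a j) (h0b _)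

lemma conv_isPmf (ha : IsPmf a) (hb : IsPmf b) : IsPmf (conv a b) := by
  refine ⟨conv_nonneg ha.1 hb.1, ?_⟩
  have hsa := ha.2.summable
  have hsb := hb.2.summable
  have hs := conv_summable ha.1 hb.1 hsa hsb
  have ht := conv_tsum ha.1 hb.1 hsa hsb
  rw [ha.2.tsum_eq, hb.2.tsum_eq, one_mul] at ht
  exact ht ▸ hs.hasSum

lemma conv_mul_eq (i : ℕ) :
    (i : ℝ) * conv a b i
      = conv (fun j : ℕ => (j : ℝ) * a j) b i + conv a (fun j : ℕ => (j : ℝ) * b j) i := by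
  unfold conv
  rw [Finset.mul_sum, ← Finset.sum_add_distrib]
  refine Finset.sum_congr rfl fun j hj => ?_
  have hji : j ≤ i := Nat.lt_succ_iff.mp (Finset.mem_range.mp hj)
  have : ((i - j : ℕ) : ℝ) = (i : ℝ) - (j : ℝ) := by
    rw [Nat.cast_sub hji]
  dsimp only
  rw [this]
  ring

lemma conv_mean_summable (ha : IsPmf a) (hb : IsPmf b)
    (hma : Summable fun i : ℕ => (i : ℝ) * a i) (hmb : Summable fun i : ℕ => (i : ℝ) * b i) :
    Summable fun i : ℕ => (i : ℝ) * conv a b i := by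
  have h1 : Summable (conv (fun j : ℕ => (j : ℝ) * a j) b) :=
    conv_summable (fun j => mul_nonneg (Nat.cast_nonneg j) (ha.1 j)) hb.1 hma hb.2.summable
  have h2 : Summable (conv a (fun j : ℕ => (j : ℝ) * b j)) :=
    conv_summable ha.1 (fun j => mul_nonneg (Nat.cast_nonneg j) (hb.1 j)) ha.2.summable hmb
  exact (h1.add h2).congr fun i => (conv_mul_eq i).symm

lemma conv_mean_tsum (ha : IsPmf a) (hb : IsPmf b)
    (hma : Summable fun i : ℕ => (i : ℝ) * a i) (hmb : Summable fun i : ℕ => (i : ℝ) * b i) :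
    ∑' i : ℕ, (i : ℝ) * conv a b i = (∑' i : ℕ, (i : ℝ) * a i) + ∑' i : ℕ, (i : ℝ) * b i := by
  have h0a' : ∀ j : ℕ, 0 ≤ (j : ℝ) * a j := fun j => mul_nonneg (Nat.cast_nonneg j) (ha.1 j)
  have h0b' : ∀ j : ℕ, 0 ≤ (j : ℝ) * b j := fun j => mul_nonneg (Nat.cast_nonneg j) (hb.1 j)
  have h1 : Summable (conv (fun j : ℕ => (j : ℝ) * a j) b) :=
    conv_summable h0a' hb.1 hma hb.2.summable
  have h2 : Summable (conv a (fun j : ℕ => (j : ℝ) * b j)) :=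
    conv_summable ha.1 h0b' ha.2.summable hmb
  calc ∑' i : ℕ, (i : ℝ) * conv a b i
      = ∑' i : ℕ, (conv (fun j : ℕ => (j : ℝ) * a j) b i + conv a (fun j : ℕ => (j : ℝ) * b j) i) :=
        tsum_congr fun i => conv_mul_eq i
    _ = (∑' i, conv (fun j : ℕ => (j : ℝ) * a j) b i) + ∑' i, conv a (fun j : ℕ => (j : ℝ) * b j) i :=
        Summable.tsum_add h1 h2
    _ = (∑' i : ℕ, (i : ℝ) * a i) * (∑' i, b i) + (∑' i, a i) * ∑' i : ℕ, (i : ℝ) * b i := by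
        rw [conv_tsum h0a' hb.1 hma hb.2.summable, conv_tsum ha.1 h0b' ha.2.summable hmb]
    _ = (∑' i : ℕ, (i : ℝ) * a i) + ∑' i : ℕ, (i : ℝ) * b i := by
        rw [ha.2.tsum_eq, hb.2.tsum_eq]; ring

end convfacts

lemma convPow_isPmf {f : ℕ → ℝ} (hf : IsPmf f) (n : ℕ) : IsPmf (convPow f n) := by
  induction n with
  | zero =>
      refine ⟨fun i => by dsimp [convPow]; split <;> norm_num, ?_⟩
      exact hasSum_ite_eq 0 1
  | succ n ih => exact conv_isPmf ih hf

lemma convPow_mean {f : ℕ → ℝ} (hf : IsPmf f) (hm : Summable fun i : ℕ => (i : ℝ) * f i) (n : ℕ) :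
    Summable (fun k : ℕ => (k : ℝ) * convPow f n k)
      ∧ ∑' k : ℕ, (k : ℝ) * convPow f n k = n * pmfMean f := by
  induction n with
  | zero =>
      have hz : ∀ k : ℕ, (k : ℝ) * convPow f 0 k = 0 := by
        intro k
        dsimp [convPow]
        rcases Nat.eq_zero_or_pos k with h | h
        · simp [h]
        · simp [Nat.pos_iff_ne_zero.mp h]
      constructor
      · exact summable_zero.congr fun k => (hz k).symm
      · rw [tsum_congr hz]; simp
  | succ n ih =>
      have hp := convPow_isPmf hf n
      constructor
      · exact conv_mean_summable hp hf ih.1 hm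
      · rw [show convPow f (n+1) = conv (convPow f n) f from rfl,
          conv_mean_tsum hp hf ih.1 hm, ih.2]
        unfold pmfMean
        push_cast
        ring


/-- For a pmf `f` on `ℕ` with mean `λ ∈ (0,∞)` and every `n ≥ 1`,
`D(T_{1/n}(f^{*n})) ≤ λ/n + E[X̄_n log(X̄_n/λ)]`. -/
theorem relEntropy_thinned_convPow_le (f : ℕ → ℝ) (lam : ℝ) (hf : IsPmf f)
    (hmean : Summable (fun i : ℕ => (i : ℝ) * f i)) (hlam : pmfMean f = lam)
    (hpos : 0 < lam) (n : ℕ) (hn : 1 ≤ n) :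
    KLpo (thin (1 / n) (convPow f n)) ≤ ENNReal.ofReal (lam / n) + lSeq f lam n := by
  classical
  by_cases hL : Summable (lTerm f lam n)
  case neg =>
    rw [lSeq, if_neg hL]
    simp
  -- notation
  set p : ℝ := 1 / (n : ℝ) with hp_def
  have hn0 : (0:ℝ) < n := by exact_mod_cast hn
  have hn0' : (n:ℝ) ≠ 0 := hn0.ne'
  have hp0 : 0 < p := by positivity
  have hp1 : p ≤ 1 := by
    rw [hp_def, div_le_one hn0]
    exact_mod_cast hn
  set q := convPow f n with hq_def
  have hq : IsPmf q := convPow_isPmf hf n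
  have hqnn := hq.1
  have hqm := convPow_mean hf hmean n
  have hqm1 : Summable (fun k : ℕ => (k:ℝ) * q k) := hqm.1
  have hqm2 : ∑' k : ℕ, (k:ℝ) * q k = n * lam := by rw [hqm.2, hlam]
  set r := po lam with hr_def
  have hrpos : ∀ i, 0 < r i := po_pos_s8 hpos
  have hr1 : HasSum r 1 := hasSum_po hpos
  -- basic facts on the thinned pmf
  have hbin_nn : ∀ k i : ℕ, 0 ≤ binp p k i := binp_nonneg hp0.le hp1
  have hGrep : ∀ i, thin p q i = ∑' k, q k * binp p k i := by
    intro i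
    refine tsum_congr fun k => ?_
    unfold binp
    ring
  have hGsum : ∀ i, Summable (fun k => q k * binp p k i) := by
    intro i
    refine Summable.of_nonneg_of_le (fun k => mul_nonneg (hqnn k) (hbin_nn k i))
      (fun k => ?_) hq.2.summable
    exact mul_le_of_le_one_right (hqnn k) (binp_le_one hp0.le hp1 k i)
  have hGnn : ∀ i, 0 ≤ thin p q i := by
    intro i
    rw [hGrep i]
    exact tsum_nonneg fun k => mul_nonneg (hqnn k) (hbin_nn k i)
  -- finite-support facts for binomials
  have hfin : ∀ k : ℕ, ∀ i ∉ Finset.range (k+1), binp p k i = 0 := by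
    intro k i hi
    exact binp_eq_zero (by simpa using Finset.mem_range.not.mp hi)
  have hbinsum : ∀ k, Summable (fun i => binp p k i) := fun k =>
    summable_of_ne_finset_zero (hfin k)
  have hbintsum : ∀ k, ∑' i, binp p k i = 1 := by
    intro k
    rw [tsum_eq_sum (hfin k), sum_binp]
  -- the inner relative entropies
  set sk : ℕ → ℕ → ℝ := fun k i => binp p k i * Real.log (binp p k i / r i) with hsk_def
  have hskfin : ∀ k : ℕ, ∀ i ∉ Finset.range (k+1), sk k i = 0 := by
    intro k i hi
    simp [hsk_def, hfin k i hi]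
  set Dk : ℕ → ℝ := fun k => ∑ i ∈ Finset.range (k+1), sk k i with hDk_def
  have hphik_eq : ∀ k i, phiD (binp p k i) (r i) = sk k i - binp p k i + r i := by
    intro k i
    simp [phiD, hsk_def]
  have hphik_sum : ∀ k, Summable (fun i => phiD (binp p k i) (r i)) := by
    intro k
    refine (((summable_of_ne_finset_zero (hskfin k)).sub (hbinsum k)).add
      hr1.summable).congr fun i => ?_
    rw [hphik_eq k i]
  have hphik_tsum : ∀ k, ∑' i, phiD (binp p k i) (r i) = Dk k := by
    intro k
    rw [tsum_congr (hphik_eq k),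
      Summable.tsum_add ((summable_of_ne_finset_zero (hskfin k)).sub (hbinsum k)) hr1.summable,
      Summable.tsum_sub (summable_of_ne_finset_zero (hskfin k)) (hbinsum k),
      tsum_eq_sum (hskfin k), hbintsum k, hr1.tsum_eq]
    simp [hDk_def]
  -- Step 1 : pointwise log-sum inequality
  have step1 : ∀ i, ENNReal.ofReal (phiD (thin p q i) (r i))
      ≤ ∑' k, ENNReal.ofReal (q k * phiD (binp p k i) (r i)) := by
    intro i
    by_cases hTtop : (∑' k, ENNReal.ofReal (q k * phiD (binp p k i) (r i))) = ⊤
    · rw [hTtop]; exact le_top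
    have htnn : ∀ k, 0 ≤ q k * phiD (binp p k i) (r i) := fun k =>
      mul_nonneg (hqnn k) (phiD_nonneg (hbin_nn k i) (hrpos i))
    have hts : Summable (fun k => q k * phiD (binp p k i) (r i)) :=
      summable_ofReal_ne_top htnn hTtop
    rw [← ENNReal.ofReal_tsum_of_nonneg htnn hts]
    apply ENNReal.ofReal_le_ofReal
    rw [hGrep i]
    rcases eq_or_lt_of_le (tsum_nonneg fun k => mul_nonneg (hqnn k) (hbin_nn k i) :
        (0:ℝ) ≤ ∑' k, q k * binp p k i) with h0 | hGpos
    · -- thinned value is zero at i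
      have hz : ∀ k, q k * binp p k i = 0 := by
        intro k
        have hle := Summable.le_tsum (hGsum i) k (fun j _ => mul_nonneg (hqnn j) (hbin_nn j i))
        have hge := mul_nonneg (hqnn k) (hbin_nn k i)
        rw [← h0] at hle
        linarith
      have ht_eq : ∀ k, q k * phiD (binp p k i) (r i) = q k * r i := by
        intro k
        rcases eq_or_lt_of_le (hqnn k) with hq0 | hq0
        · rw [← hq0, zero_mul, zero_mul]
        · have hb0 : binp p k i = 0 := by
            have := hz k
            rcases mul_eq_zero.mp this with h | h
            · exact absurd h hq0.ne'
            · exact h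
          rw [hb0, phiD_zero]
      rw [tsum_congr ht_eq, tsum_mul_right, hq.2.tsum_eq, one_mul, ← h0, phiD_zero]
    · -- thinned value is positive at i
      set G := ∑' k, q k * binp p k i with hG
      have key : ∀ k, q k * (phiD G (r i) + Real.log (G / r i) * (binp p k i - G))
          ≤ q k * phiD (binp p k i) (r i) := fun k =>
        mul_le_mul_of_nonneg_left (phiD_tangent (hbin_nn k i) hGpos (hrpos i)) (hqnn k)
      have hlhs_s : Summable (fun k =>
          q k * (phiD G (r i) + Real.log (G / r i) * (binp p k i - G))) := by
        have h1 : Summable (fun k => (phiD G (r i) - Real.log (G / r i) * G) * q k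
            + Real.log (G / r i) * (q k * binp p k i)) :=
          (hq.2.summable.mul_left _).add ((hGsum i).mul_left _)
        exact h1.congr fun k => by ring
      have hles := Summable.tsum_le_tsum key hlhs_s hts
      refine le_trans (le_of_eq ?_) hles
      have hrepr : ∀ k, q k * (phiD G (r i) + Real.log (G / r i) * (binp p k i - G))
          = (phiD G (r i) - Real.log (G / r i) * G) * q k
            + Real.log (G / r i) * (q k * binp p k i) := fun k => by ring
      rw [tsum_congr hrepr,
        Summable.tsum_add (hq.2.summable.mul_left _) ((hGsum i).mul_left _),
        tsum_mul_left, tsum_mul_left, hq.2.tsum_eq, ← hG]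
      ring
  -- Step 2 : sum over i and swap
  have step2 : (∑' i : ℕ, ENNReal.ofReal (phiD (thin p q i) (r i)))
      ≤ ∑' k : ℕ, ENNReal.ofReal (q k * Dk k) := by
    calc (∑' i : ℕ, ENNReal.ofReal (phiD (thin p q i) (r i)))
        ≤ ∑' i : ℕ, ∑' k : ℕ, ENNReal.ofReal (q k * phiD (binp p k i) (r i)) :=
          ENNReal.tsum_le_tsum step1
      _ = ∑' k : ℕ, ∑' i : ℕ, ENNReal.ofReal (q k * phiD (binp p k i) (r i)) :=
          ENNReal.tsum_comm
      _ = ∑' k : ℕ, ENNReal.ofReal (q k * Dk k) := by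
          refine tsum_congr fun k => ?_
          calc (∑' i : ℕ, ENNReal.ofReal (q k * phiD (binp p k i) (r i)))
              = ∑' i : ℕ, ENNReal.ofReal (q k) * ENNReal.ofReal (phiD (binp p k i) (r i)) :=
                tsum_congr fun i => ENNReal.ofReal_mul (hqnn k)
            _ = ENNReal.ofReal (q k) * ∑' i : ℕ, ENNReal.ofReal (phiD (binp p k i) (r i)) :=
                ENNReal.tsum_mul_left
            _ = ENNReal.ofReal (q k) * ENNReal.ofReal (Dk k) := by
                rw [← ENNReal.ofReal_tsum_of_nonneg
                  (fun i => phiD_nonneg (hbin_nn k i) (hrpos i)) (hphik_sum k), hphik_tsum k]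
            _ = ENNReal.ofReal (q k * Dk k) := (ENNReal.ofReal_mul (hqnn k)).symm
  -- Step 3 : bound on the inner relative entropy
  set Uk : ℕ → ℝ := fun k => (k:ℝ) * p^2 + (k:ℝ)/(n:ℝ) * Real.log ((k:ℝ)/((n:ℝ)*lam))
      - (k:ℝ) * p + lam with hUk_def
  have step3 : ∀ k, Dk k ≤ Uk k := by
    intro k
    have hterm : ∀ i ∈ Finset.range (k+1), sk k i
        ≤ binp p k i * ((i:ℝ) * Real.log ((k:ℝ)*p/lam) + ((k:ℝ) - i) * Real.log (1 - p) + lam) := by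
      intro i hi
      have hik : i ≤ k := Nat.lt_succ_iff.mp (Finset.mem_range.mp hi)
      rcases eq_or_lt_of_le (hbin_nn k i) with hb0 | hb
      · simp [hsk_def, ← hb0]
      · rw [hsk_def]
        apply mul_le_mul_of_nonneg_left _ (hbin_nn k i)
        have hc : (0:ℝ) < (k.choose i : ℝ) := by exact_mod_cast Nat.choose_pos hik
        have hpi : (0:ℝ) < p^i := pow_pos hp0 i
        have h1p : (0:ℝ) < (1-p)^(k-i) := by
          rcases eq_or_lt_of_le (pow_nonneg (by linarith : (0:ℝ) ≤ 1 - p) (k-i)) with hz | hz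
          · exfalso
            have : binp p k i = 0 := by rw [binp, ← hz, mul_zero]
            rw [this] at hb
            exact lt_irrefl _ hb
          · exact hz
        have hfacpos : (0:ℝ) < (i.factorial : ℝ) := by
          exact_mod_cast Nat.factorial_pos i
        have hlogb : Real.log (binp p k i)
            = Real.log (k.choose i : ℝ) + (i:ℝ) * Real.log p
              + ((k:ℝ)-(i:ℝ)) * Real.log (1-p) := by
          rw [binp, Real.log_mul (by positivity) h1p.ne', Real.log_mul hc.ne' hpi.ne',
            Real.log_pow, Real.log_pow, Nat.cast_sub hik]
        have hlogr : Real.log (r i)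
            = (i:ℝ) * Real.log lam - lam - Real.log (i.factorial : ℝ) := by
          rw [hr_def]
          show Real.log (lam ^ i * Real.exp (-lam) / (Nat.factorial i)) = _
          rw [Real.log_div (by positivity) hfacpos.ne',
            Real.log_mul (by positivity) (Real.exp_ne_zero _), Real.log_pow, Real.log_exp]
          ring
        rw [Real.log_div hb.ne' (hrpos i).ne', hlogb, hlogr]
        rcases Nat.eq_zero_or_pos i with hi0 | hi0
        · subst hi0
          simp
        · have hk0 : 0 < k := lt_of_lt_of_le hi0 hik
          have hkR : (0:ℝ) < (k:ℝ) := by exact_mod_cast hk0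
          have hlog_split : Real.log ((k:ℝ)*p/lam)
              = Real.log (k:ℝ) + Real.log p - Real.log lam := by
            rw [Real.log_div (by positivity) hpos.ne', Real.log_mul hkR.ne' hp0.ne']
          rw [hlog_split]
          have hcf : Real.log (k.choose i : ℝ) + Real.log (i.factorial : ℝ)
              ≤ (i:ℝ) * Real.log (k:ℝ) := by
            rw [← Real.log_mul hc.ne' hfacpos.ne', ← Real.log_pow]
            apply Real.log_le_log (by positivity)
            have hnat : k.choose i * i.factorial ≤ k ^ i := by
              rw [mul_comm, ← Nat.descFactorial_eq_factorial_mul_choose]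
              exact Nat.descFactorial_le_pow k i
            exact_mod_cast hnat
          nlinarith [Nat.cast_nonneg (α := ℝ) i]
    have hDle : Dk k ≤ (k:ℝ)*p * Real.log ((k:ℝ)*p/lam)
        + ((k:ℝ) - (k:ℝ)*p) * Real.log (1-p) + lam := by
      have hsum1 := Finset.sum_le_sum hterm
      rw [hDk_def]
      refine le_trans hsum1 (le_of_eq ?_)
      calc ∑ i ∈ Finset.range (k+1), binp p k i * ((i:ℝ) * Real.log ((k:ℝ)*p/lam)
              + ((k:ℝ) - i) * Real.log (1 - p) + lam)
          = ∑ i ∈ Finset.range (k+1), (Real.log ((k:ℝ)*p/lam) * ((i:ℝ) * binp p k i)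
              + (Real.log (1-p) * (k:ℝ) + lam) * binp p k i
              - Real.log (1-p) * ((i:ℝ) * binp p k i)) :=
            Finset.sum_congr rfl fun i _ => by ring
        _ = Real.log ((k:ℝ)*p/lam) * ((k:ℝ)*p) + (Real.log (1-p) * (k:ℝ) + lam) * 1
              - Real.log (1-p) * ((k:ℝ)*p) := by
            rw [Finset.sum_sub_distrib, Finset.sum_add_distrib, ← Finset.mul_sum,
              ← Finset.mul_sum, ← Finset.mul_sum, sum_mul_binp, sum_binp]
        _ = (k:ℝ)*p * Real.log ((k:ℝ)*p/lam) + ((k:ℝ) - (k:ℝ)*p) * Real.log (1-p) + lam := by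
            ring
    refine le_trans hDle ?_
    -- convert and use log(1-p) ≤ -p
    have hlog1p : ((k:ℝ) - (k:ℝ)*p) * Real.log (1-p) ≤ (k:ℝ)*p^2 - (k:ℝ)*p := by
      rcases eq_or_lt_of_le (by linarith : (0:ℝ) ≤ 1 - p) with hz | hz
      · have hp1' : p = 1 := by linarith
        rw [← hz, Real.log_zero, mul_zero, hp1']
        norm_num
      · have hlog : Real.log (1-p) ≤ -p := by
          have := Real.log_le_sub_one_of_pos hz
          linarith
        have hk1p : (0:ℝ) ≤ (k:ℝ) * (1 - p) :=
          mul_nonneg (Nat.cast_nonneg k) (by linarith)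
        nlinarith
    have hkp : (k:ℝ) * p = (k:ℝ)/(n:ℝ) := by
      rw [hp_def]; ring
    have harg : (k:ℝ)*p/lam = (k:ℝ)/((n:ℝ)*lam) := by
      rw [hp_def]; field_simp
    rw [hUk_def]
    dsimp only
    rw [← harg, ← hkp]
    linarith
  -- Step 4/5 : summing the bound
  set L := ∑' k : ℕ, lTerm f lam n k with hL_def
  have hUeq : ∀ k : ℕ, q k * Uk k
      = (p^2 - p) * ((k:ℝ) * q k) + lTerm f lam n k + lam * q k := by
    intro k
    rw [hUk_def, lTerm, ← hq_def]
    dsimp only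
    ring
  have hUsum : Summable (fun k => q k * Uk k) := by
    have h1 : Summable (fun k : ℕ => (p^2 - p) * ((k:ℝ) * q k) + lTerm f lam n k + lam * q k) :=
      ((hqm1.mul_left _).add hL).add (hq.2.summable.mul_left _)
    exact h1.congr fun k => (hUeq k).symm
  have hUtsum : ∑' k, q k * Uk k = lam/(n:ℝ) + L := by
    rw [tsum_congr hUeq,
      Summable.tsum_add ((hqm1.mul_left _).add hL) (hq.2.summable.mul_left _),
      Summable.tsum_add (hqm1.mul_left _) hL, tsum_mul_left, tsum_mul_left, hqm2, hq.2.tsum_eq,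
      ← hL_def, hp_def]
    field_simp
    ring
  have hUnn : ∀ k, 0 ≤ q k * Uk k := by
    intro k
    refine mul_nonneg (hqnn k) ?_
    have hphi := phiD_nonneg (show (0:ℝ) ≤ (k:ℝ)/(n:ℝ) by positivity) hpos
    unfold phiD at hphi
    rw [div_div] at hphi
    have hkp : (k:ℝ) * p = (k:ℝ)/(n:ℝ) := by rw [hp_def]; ring
    have hkp2 : (0:ℝ) ≤ (k:ℝ) * p^2 := by positivity
    rw [hUk_def]
    dsimp only
    rw [hkp]
    linarith
  have step5 : (∑' k : ℕ, ENNReal.ofReal (q k * Dk k))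
      ≤ ENNReal.ofReal (lam/(n:ℝ) + L) := by
    calc (∑' k : ℕ, ENNReal.ofReal (q k * Dk k))
        ≤ ∑' k : ℕ, ENNReal.ofReal (q k * Uk k) :=
          ENNReal.tsum_le_tsum fun k => ENNReal.ofReal_le_ofReal
            (mul_le_mul_of_nonneg_left (step3 k) (hqnn k))
      _ = ENNReal.ofReal (∑' k, q k * Uk k) :=
          (ENNReal.ofReal_tsum_of_nonneg hUnn hUsum).symm
      _ = ENNReal.ofReal (lam/(n:ℝ) + L) := by rw [hUtsum]
  have hS : (∑' i : ℕ, ENNReal.ofReal (phiD (thin p q i) (r i)))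
      ≤ ENNReal.ofReal (lam/(n:ℝ) + L) := step2.trans step5
  have hSne : (∑' i : ℕ, ENNReal.ofReal (phiD (thin p q i) (r i))) ≠ ⊤ :=
    ne_top_of_le_ne_top ENNReal.ofReal_ne_top hS
  have hphis : Summable (fun i => phiD (thin p q i) (r i)) :=
    summable_ofReal_ne_top (fun i => phiD_nonneg (hGnn i) (hrpos i)) hSne
  -- total mass of the thinned pmf
  have hmulnn : ∀ i k : ℕ, 0 ≤ q k * binp p k i := fun i k =>
    mul_nonneg (hqnn k) (hbin_nn k i)
  have hswap1 : (∑' i : ℕ, ENNReal.ofReal (thin p q i)) = ENNReal.ofReal 1 := by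
    have h1 : ∀ i : ℕ, ENNReal.ofReal (thin p q i)
        = ∑' k : ℕ, ENNReal.ofReal (q k * binp p k i) := by
      intro i
      rw [hGrep i]
      exact ENNReal.ofReal_tsum_of_nonneg (hmulnn i) (hGsum i)
    rw [tsum_congr h1, ENNReal.tsum_comm]
    have h2 : ∀ k : ℕ, (∑' i : ℕ, ENNReal.ofReal (q k * binp p k i))
        = ENNReal.ofReal (q k) := by
      intro k
      have hfin' : ∀ i ∉ Finset.range (k+1), ENNReal.ofReal (q k * binp p k i) = 0 := by
        intro i hi
        rw [hfin k i hi, mul_zero, ENNReal.ofReal_zero]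
      rw [tsum_eq_sum hfin', ← ENNReal.ofReal_sum_of_nonneg (fun i _ => hmulnn i k),
        ← Finset.mul_sum, sum_binp, mul_one]
    rw [tsum_congr h2, ← ENNReal.ofReal_tsum_of_nonneg hqnn hq.2.summable, hq.2.tsum_eq]
  have hgS : Summable (thin p q) :=
    summable_ofReal_ne_top hGnn (by rw [hswap1]; exact ENNReal.ofReal_ne_top)
  have hg1 : ∑' i, thin p q i = 1 := tsum_eq_of_ofReal_tsum hGnn zero_le_one hgS hswap1
  -- the mean of the thinned pmf is lam
  have hmean_swap : (∑' i : ℕ, ENNReal.ofReal ((i:ℝ) * thin p q i)) = ENNReal.ofReal lam := by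
    have h1 : ∀ i : ℕ, ENNReal.ofReal ((i:ℝ) * thin p q i)
        = ∑' k : ℕ, ENNReal.ofReal ((i:ℝ) * (q k * binp p k i)) := by
      intro i
      rw [hGrep i, ← tsum_mul_left]
      exact ENNReal.ofReal_tsum_of_nonneg
        (fun k => mul_nonneg (Nat.cast_nonneg i) (hmulnn i k)) ((hGsum i).mul_left _)
    rw [tsum_congr h1, ENNReal.tsum_comm]
    have h2 : ∀ k : ℕ, (∑' i : ℕ, ENNReal.ofReal ((i:ℝ) * (q k * binp p k i)))
        = ENNReal.ofReal (q k * ((k:ℝ)*p)) := by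
      intro k
      have hfin' : ∀ i ∉ Finset.range (k+1),
          ENNReal.ofReal ((i:ℝ) * (q k * binp p k i)) = 0 := by
        intro i hi
        rw [hfin k i hi, mul_zero, mul_zero, ENNReal.ofReal_zero]
      rw [tsum_eq_sum hfin', ← ENNReal.ofReal_sum_of_nonneg
        (fun i _ => mul_nonneg (Nat.cast_nonneg i) (hmulnn i k))]
      congr 1
      have hrw : ∀ i : ℕ, (i:ℝ) * (q k * binp p k i) = q k * ((i:ℝ) * binp p k i) :=
        fun i => by ring
      rw [Finset.sum_congr rfl (fun i _ => hrw i), ← Finset.mul_sum, sum_mul_binp]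
    rw [tsum_congr h2]
    have hsum' : Summable (fun k : ℕ => q k * ((k:ℝ)*p)) :=
      (hqm1.mul_left p).congr fun k => by ring
    rw [← ENNReal.ofReal_tsum_of_nonneg
      (fun k => mul_nonneg (hqnn k) (by positivity)) hsum']
    congr 1
    calc ∑' k : ℕ, q k * ((k:ℝ)*p) = p * ∑' k : ℕ, (k:ℝ) * q k := by
          rw [← tsum_mul_left]
          exact tsum_congr fun k => by ring
      _ = lam := by rw [hqm2, hp_def]; field_simp
  have hmean_s : Summable (fun i : ℕ => (i:ℝ) * thin p q i) :=
    summable_ofReal_ne_top (fun i => mul_nonneg (Nat.cast_nonneg i) (hGnn i))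
      (by rw [hmean_swap]; exact ENNReal.ofReal_ne_top)
  have hmean_g : pmfMean (thin p q) = lam :=
    tsum_eq_of_ofReal_tsum (fun i => mul_nonneg (Nat.cast_nonneg i) (hGnn i)) hpos.le
      hmean_s hmean_swap
  -- final assembly
  have hkl_cond : ∀ i, r i = 0 → thin p q i = 0 := fun i h => absurd h (hrpos i).ne'
  have hglog : ∀ i, thin p q i * Real.log (thin p q i / r i)
      = phiD (thin p q i) (r i) + thin p q i - r i := by
    intro i
    unfold phiD
    ring
  have hglog_s : Summable (fun i : ℕ => thin p q i * Real.log (thin p q i / r i)) :=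
    ((hphis.add hgS).sub hr1.summable).congr fun i => (hglog i).symm
  rw [KLpo, hmean_g, KL, if_pos ⟨hkl_cond, hglog_s⟩]
  have hval : ∑' i : ℕ, thin p q i * Real.log (thin p q i / r i)
      = ∑' i : ℕ, phiD (thin p q i) (r i) := by
    rw [tsum_congr hglog, Summable.tsum_sub (hphis.add hgS) hr1.summable, Summable.tsum_add hphis hgS,
      hg1, hr1.tsum_eq]
    ring
  calc ENNReal.ofReal (∑' i : ℕ, thin p q i * Real.log (thin p q i / r i))
      = ENNReal.ofReal (∑' i : ℕ, phiD (thin p q i) (r i)) := by rw [hval]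
    _ = ∑' i : ℕ, ENNReal.ofReal (phiD (thin p q i) (r i)) :=
        ENNReal.ofReal_tsum_of_nonneg (fun i => phiD_nonneg (hGnn i) (hrpos i)) hphis
    _ ≤ ENNReal.ofReal (lam/(n:ℝ) + L) := hS
    _ ≤ ENNReal.ofReal (lam/(n:ℝ)) + ENNReal.ofReal L := ENNReal.ofReal_add_le
    _ = ENNReal.ofReal (lam/(n:ℝ)) + lSeq f lam n := by rw [lSeq, if_pos hL, hL_def]
end

section
/- Let X_1, X_2, ... be i.i.d. random variables on Z_+ with common pmf f of mean λ ∈ (0,∞), and set X̄_n = (1/n)Σ_{i=1}^n X_i and l_n = E[X̄_n log(X̄_n/λ)] (with 0·log 0 = 0). Then l_n ≥ 0 and l_n ≤ l_{n-1} for all n ≥ 2; moreover, if l_k < ∞ for some k, then l_n → 0 as n → ∞. -/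
open scoped BigOperators ENNReal Classical
open Filter

namespace LLN

/-- Tool T: antidiagonal rearrangement in `ℝ≥0∞`. -/
lemma toolT (F : ℕ → ℕ → ℝ≥0∞) :
    ∑' m : ℕ, ∑ j ∈ Finset.range (m + 1), F j (m - j) = ∑' j : ℕ, ∑' k : ℕ, F j k := by
  rw [← ENNReal.tsum_prod]
  have h1 : ∀ m : ℕ, (∑ j ∈ Finset.range (m + 1), F j (m - j))
      = ∑' j : ℕ, (if j ≤ m then F j (m - j) else 0) := by
    intro m
    rw [tsum_eq_sum (s := Finset.range (m + 1))]
    · exact Finset.sum_congr rfl fun j hj => by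
        rw [if_pos (Nat.lt_succ_iff.mp (Finset.mem_range.mp hj))]
    · intro j hj
      rw [if_neg (fun h => hj (Finset.mem_range.mpr (Nat.lt_succ_iff.mpr h)))]
  simp_rw [h1]
  rw [← ENNReal.tsum_prod (f := fun m j => if j ≤ m then F j (m - j) else 0)]
  have key := Function.Injective.tsum_eq (f := fun p : ℕ × ℕ => if p.2 ≤ p.1 then F p.2 (p.1 - p.2) else 0)
    (g := fun p : ℕ × ℕ => (p.1 + p.2, p.1)) ?_ ?_
  · rw [← key]
    apply tsum_congr
    rintro ⟨a, b⟩
    simp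
  · intro a b h
    simp only [Prod.mk.injEq] at h
    exact Prod.ext h.2 (by omega)
  · rintro ⟨m, j⟩ hm
    by_cases h : j ≤ m
    · exact ⟨(j, m - j), by simp; omega⟩
    · simp [Function.mem_support, if_neg h] at hm

/-- Master rearrangement for weighted convolutions. -/
lemma toolT_mul (u v : ℕ → ℝ) (hu : ∀ i, 0 ≤ u i) (hv : ∀ i, 0 ≤ v i) (φ : ℕ → ℕ → ℝ≥0∞) :
    ∑' m : ℕ, ∑ j ∈ Finset.range (m + 1), ENNReal.ofReal (u j * v (m - j)) * φ j (m - j)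
      = ∑' j : ℕ, ∑' k : ℕ, ENNReal.ofReal (u j) * ENNReal.ofReal (v k) * φ j k := by
  rw [← toolT (fun j k => ENNReal.ofReal (u j) * ENNReal.ofReal (v k) * φ j k)]
  apply tsum_congr; intro m
  apply Finset.sum_congr rfl; intro j _
  rw [ENNReal.ofReal_mul (hu j)]

/-- `ofReal` of a convolution term. -/
lemma ofReal_conv (u v : ℕ → ℝ) (hu : ∀ i, 0 ≤ u i) (hv : ∀ i, 0 ≤ v i) (m : ℕ) :
    ENNReal.ofReal (conv u v m)
      = ∑ j ∈ Finset.range (m + 1), ENNReal.ofReal (u j * v (m - j)) := by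
  rw [conv, ENNReal.ofReal_sum_of_nonneg]
  intro j _; exact mul_nonneg (hu j) (hv (m - j))

/-- Summability transfer. -/
lemma summable_iff_SE (u : ℕ → ℝ) (hu : ∀ i, 0 ≤ u i) :
    Summable u ↔ (∑' i, ENNReal.ofReal (u i)) ≠ ⊤ := by
  constructor
  · intro h
    rw [← ENNReal.ofReal_tsum_of_nonneg hu h]
    exact ENNReal.ofReal_ne_top
  · intro h
    have := ENNReal.summable_toReal h
    refine this.congr fun i => ?_
    rw [ENNReal.toReal_ofReal (hu i)]

lemma ofReal_tsum (u : ℕ → ℝ) (hu : ∀ i, 0 ≤ u i) (h : Summable u) :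
    ENNReal.ofReal (∑' i, u i) = ∑' i, ENNReal.ofReal (u i) :=
  ENNReal.ofReal_tsum_of_nonneg hu h

lemma tsum_toReal (u : ℕ → ℝ) (hu : ∀ i, 0 ≤ u i) (h : (∑' i, ENNReal.ofReal (u i)) ≠ ⊤) :
    (∑' i, ENNReal.ofReal (u i)).toReal = ∑' i, u i := by
  rw [ENNReal.tsum_toReal_eq (fun i => ENNReal.ofReal_ne_top)]
  exact tsum_congr fun i => ENNReal.toReal_ofReal (hu i)

lemma conv_coeff (u v : ℕ → ℝ) (m : ℕ) :
    conv u v m = PowerSeries.coeff m (PowerSeries.mk u * PowerSeries.mk v) := by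
  rw [PowerSeries.coeff_mul, Finset.Nat.sum_antidiagonal_eq_sum_range_succ_mk]
  simp [conv, PowerSeries.coeff_mk]

lemma mk_convPow (u : ℕ → ℝ) (n : ℕ) :
    PowerSeries.mk (convPow u n) = (PowerSeries.mk u) ^ n := by
  induction n with
  | zero =>
    ext m
    simp [convPow, PowerSeries.coeff_mk, PowerSeries.coeff_one]
  | succ n ih =>
    ext m
    rw [pow_succ, ← ih, PowerSeries.coeff_mk]
    show conv (convPow u n) u m = _
    rw [conv_coeff]

lemma convPow_coeff (u : ℕ → ℝ) (n : ℕ) (m : ℕ) :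
    convPow u n m = PowerSeries.coeff m ((PowerSeries.mk u) ^ n) := by
  rw [← mk_convPow, PowerSeries.coeff_mk]

open PowerSeries in
lemma jmul_coeff (φ : PowerSeries ℝ) (j : ℕ) :
    (j : ℝ) * PowerSeries.coeff j φ
      = PowerSeries.coeff j (PowerSeries.X * (d⁄dX ℝ φ)) := by
  cases j with
  | zero => simp
  | succ m => rw [PowerSeries.coeff_succ_X_mul, PowerSeries.coeff_derivative]; push_cast; ring

open PowerSeries in
/-- Key identity: `j · f^{*n}(j) = n · (f^{*(n-1)} * (k·f))(j)`. -/
lemma key_identity (u : ℕ → ℝ) (n : ℕ) (hn : 1 ≤ n) (j : ℕ) :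
    (j : ℝ) * convPow u n j = n * conv (convPow u (n - 1)) (fun k => (k : ℝ) * u k) j := by
  have h1 : PowerSeries.mk (fun k => (k : ℝ) * u k)
      = PowerSeries.X * d⁄dX ℝ (PowerSeries.mk u) := by
    ext k
    rw [PowerSeries.coeff_mk]
    have := jmul_coeff (PowerSeries.mk u) k
    rwa [PowerSeries.coeff_mk] at this
  rw [convPow_coeff, jmul_coeff, conv_coeff, mk_convPow, h1,
    Derivation.leibniz_pow]
  have h2 : (n • (PowerSeries.mk u ^ (n - 1) • (d⁄dX ℝ) (PowerSeries.mk u)))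
      = (n : ℝ) • (PowerSeries.mk u ^ (n - 1) * (d⁄dX ℝ) (PowerSeries.mk u)) := by
    rw [smul_eq_mul, ← Nat.cast_smul_eq_nsmul ℝ]
  rw [h2, mul_smul_comm, map_smul, smul_eq_mul]
  congr 1
  ring

noncomputable def SE (u : ℕ → ℝ) : ℝ≥0∞ := ∑' i, ENNReal.ofReal (u i)
noncomputable def ME (u : ℕ → ℝ) : ℝ≥0∞ := ∑' i : ℕ, (i : ℝ≥0∞) * ENNReal.ofReal (u i)

lemma conv_nonneg' {u v : ℕ → ℝ} (hu : ∀ i, 0 ≤ u i) (hv : ∀ i, 0 ≤ v i) (i : ℕ) :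
    0 ≤ conv u v i :=
  Finset.sum_nonneg fun j _ => mul_nonneg (hu j) (hv (i - j))

lemma convPow_nonneg {u : ℕ → ℝ} (hu : ∀ i, 0 ≤ u i) (n : ℕ) (i : ℕ) :
    0 ≤ convPow u n i := by
  induction n generalizing i with
  | zero => by_cases h : i = 0 <;> simp [convPow, h]
  | succ n ih => exact conv_nonneg' ih hu i

lemma SE_conv {u v : ℕ → ℝ} (hu : ∀ i, 0 ≤ u i) (hv : ∀ i, 0 ≤ v i) :
    SE (conv u v) = SE u * SE v := by
  have := toolT_mul u v hu hv (fun _ _ => 1)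
  simp only [mul_one] at this
  unfold SE
  rw [show (∑' i, ENNReal.ofReal (conv u v i))
      = ∑' m : ℕ, ∑ j ∈ Finset.range (m + 1), ENNReal.ofReal (u j * v (m - j)) from
    tsum_congr fun m => ofReal_conv u v hu hv m, this]
  rw [show (∑' (j : ℕ) (k : ℕ), ENNReal.ofReal (u j) * ENNReal.ofReal (v k))
      = ∑' j : ℕ, ENNReal.ofReal (u j) * ∑' k : ℕ, ENNReal.ofReal (v k) from
    tsum_congr fun j => ENNReal.tsum_mul_left, ENNReal.tsum_mul_right]

lemma ME_conv {u v : ℕ → ℝ} (hu : ∀ i, 0 ≤ u i) (hv : ∀ i, 0 ≤ v i) :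
    ME (conv u v) = ME u * SE v + SE u * ME v := by
  have key := toolT_mul u v hu hv (fun j k => (j : ℝ≥0∞) + (k : ℝ≥0∞))
  unfold ME SE
  have lhs : (∑' m : ℕ, (m : ℝ≥0∞) * ENNReal.ofReal (conv u v m))
      = ∑' m : ℕ, ∑ j ∈ Finset.range (m + 1),
          ENNReal.ofReal (u j * v (m - j)) * (((j : ℝ≥0∞)) + ((m - j : ℕ) : ℝ≥0∞)) := by
    apply tsum_congr; intro m
    rw [ofReal_conv u v hu hv m, Finset.mul_sum]
    apply Finset.sum_congr rfl
    intro j hj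
    have hjm : j ≤ m := Nat.lt_succ_iff.mp (Finset.mem_range.mp hj)
    rw [mul_comm]
    congr 1
    rw [← Nat.cast_add]
    congr 1
    omega
  rw [lhs, key]
  have expand : ∀ j k : ℕ, ENNReal.ofReal (u j) * ENNReal.ofReal (v k) * ((j : ℝ≥0∞) + (k : ℝ≥0∞))
      = (j : ℝ≥0∞) * ENNReal.ofReal (u j) * ENNReal.ofReal (v k)
        + ENNReal.ofReal (u j) * ((k : ℝ≥0∞) * ENNReal.ofReal (v k)) := by
    intro j k; ring
  calc ∑' (j : ℕ) (k : ℕ), ENNReal.ofReal (u j) * ENNReal.ofReal (v k) * ((j : ℝ≥0∞) + (k : ℝ≥0∞))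
      = ∑' (j : ℕ), ((∑' k : ℕ, (j : ℝ≥0∞) * ENNReal.ofReal (u j) * ENNReal.ofReal (v k))
          + ∑' k : ℕ, ENNReal.ofReal (u j) * ((k : ℝ≥0∞) * ENNReal.ofReal (v k))) := by
        apply tsum_congr; intro j
        rw [← ENNReal.tsum_add]
        exact tsum_congr fun k => expand j k
    _ = (∑' (j : ℕ), (j : ℝ≥0∞) * ENNReal.ofReal (u j) * (∑' k, ENNReal.ofReal (v k)))
          + ∑' (j : ℕ), ENNReal.ofReal (u j) * (∑' k : ℕ, (k : ℝ≥0∞) * ENNReal.ofReal (v k)) := by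
        rw [ENNReal.tsum_add]
        congr 1 <;> exact tsum_congr fun j => ENNReal.tsum_mul_left
    _ = _ := by rw [ENNReal.tsum_mul_right, ENNReal.tsum_mul_right]

lemma SE_convPow {u : ℕ → ℝ} (hu : ∀ i, 0 ≤ u i) (hse : SE u = 1) (n : ℕ) :
    SE (convPow u n) = 1 := by
  induction n with
  | zero =>
    unfold SE
    rw [tsum_eq_single 0 (by intro b hb; simp [convPow, hb])]
    simp [convPow]
  | succ n ih =>
    show SE (conv (convPow u n) u) = 1
    rw [SE_conv (convPow_nonneg hu n) hu, ih, hse, one_mul]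

lemma ME_convPow {u : ℕ → ℝ} (hu : ∀ i, 0 ≤ u i) (hse : SE u = 1) (n : ℕ) :
    ME (convPow u n) = n * ME u := by
  induction n with
  | zero =>
    unfold ME
    rw [tsum_eq_single 0 (by intro b hb; simp [convPow, hb])]
    simp
  | succ n ih =>
    show ME (conv (convPow u n) u) = _
    rw [ME_conv (convPow_nonneg hu n) hu, ih, hse, SE_convPow hu hse n]
    push_cast
    ring

noncomputable def Phi (lam : ℝ) (x : ℝ) : ℝ := x * Real.log (x / lam) - x + lam

lemma Phi_nonneg {lam : ℝ} (hlam : 0 < lam) {x : ℝ} (hx : 0 ≤ x) : 0 ≤ Phi lam x := by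
  rcases eq_or_lt_of_le hx with h | h
  · simp [Phi, ← h, Real.log_zero, hlam.le]
  · have h1 : Real.log (lam / x) ≤ lam / x - 1 := Real.log_le_sub_one_of_pos (div_pos hlam h)
    have h2 : Real.log (lam / x) = Real.log lam - Real.log x := Real.log_div hlam.ne' h.ne'
    have h3 : Real.log (x / lam) = Real.log x - Real.log lam := Real.log_div h.ne' hlam.ne'
    have h4 : lam / x * x = lam := div_mul_cancel₀ _ h.ne'
    unfold Phi
    nlinarith [mul_le_mul_of_nonneg_right h1 hx]

lemma Phi_eq {lam : ℝ} (hlam : 0 < lam) {x : ℝ} (hx : 0 ≤ x) :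
    Phi lam x = x * Real.log x - (Real.log lam + 1) * x + lam := by
  rcases eq_or_lt_of_le hx with h | h
  · simp [Phi, ← h]
  · unfold Phi
    rw [Real.log_div h.ne' hlam.ne']
    ring

lemma Phi_convexOn {lam : ℝ} (hlam : 0 < lam) : ConvexOn ℝ (Set.Ici 0) (Phi lam) := by
  have haff : ConvexOn ℝ (Set.Ici 0) (fun x : ℝ => -((Real.log lam + 1) * x) + lam) :=
    ⟨convex_Ici 0, fun x _ y _ a b _ _ hab =>
      le_of_eq (by simp only [smul_eq_mul]; linear_combination (-lam) * hab)⟩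
  have hg := Real.convexOn_mul_log.add haff
  refine hg.congr fun x hx => ?_
  simp only [Pi.add_apply]
  rw [Phi_eq hlam hx]
  ring

/-- Finite Jensen inequality for the conditional distribution of `S_n` given `S_{n+1} = m`. -/
lemma jensen_step {f : ℕ → ℝ} (hf0 : ∀ i, 0 ≤ f i) {ψ : ℝ → ℝ} (hψc : ConvexOn ℝ (Set.Ici 0) ψ)
    (hψ0 : ∀ x : ℝ, 0 ≤ x → 0 ≤ ψ x) (n : ℕ) (hn : 1 ≤ n) (m : ℕ) :
    convPow f (n + 1) m * ψ ((m : ℝ) / (n + 1 : ℕ))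
      ≤ ∑ j ∈ Finset.range (m + 1),
          convPow f n j * ψ ((j : ℝ) / (n : ℕ)) * f (m - j) := by
  classical
  set p : ℕ → ℝ := convPow f n with hp
  have hp0 : ∀ i, 0 ≤ p i := convPow_nonneg hf0 n
  set w : ℕ → ℝ := fun j => p j * f (m - j) with hw
  have hw0 : ∀ j ∈ Finset.range (m + 1), 0 ≤ w j :=
    fun j _ => mul_nonneg (hp0 j) (hf0 (m - j))
  have hsum : ∑ j ∈ Finset.range (m + 1), w j = convPow f (n + 1) m := rfl
  -- mean identity
  have hA : ∑ j ∈ Finset.range (m + 1), (j : ℝ) * w j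
      = (n : ℝ) / (n + 1) * (m * convPow f (n + 1) m) := by
    have hkey := key_identity f (n + 1) (by omega) m
    simp only [Nat.add_sub_cancel] at hkey
    -- hkey : m * convPow f (n+1) m = (n+1) * conv p (fun k => k * f k) m
    have hsplit : (m : ℝ) * convPow f (n + 1) m
        = (∑ j ∈ Finset.range (m + 1), (j : ℝ) * w j)
          + conv p (fun k => (k : ℝ) * f k) m := by
      have : (m : ℝ) * convPow f (n + 1) m
          = ∑ j ∈ Finset.range (m + 1), (m : ℝ) * (p j * f (m - j)) := by
        rw [← Finset.mul_sum, hsum]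
      rw [this, conv, ← Finset.sum_add_distrib]
      apply Finset.sum_congr rfl
      intro j hj
      have hjm : j ≤ m := Nat.lt_succ_iff.mp (Finset.mem_range.mp hj)
      have : ((m - j : ℕ) : ℝ) = (m : ℝ) - j := by
        rw [Nat.cast_sub hjm]
      rw [this, hw]
      ring
    have hne : (0:ℝ) < (n:ℝ) + 1 := by positivity
    have hkey' : conv p (fun k => (k : ℝ) * f k) m
        = (m : ℝ) * convPow f (n + 1) m / ((n : ℝ) + 1) := by
      rw [hkey]
      push_cast
      field_simp
      rfl
    rw [hkey'] at hsplit
    field_simp at hsplit ⊢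
    push_cast
    linarith
  by_cases hq : convPow f (n + 1) m = 0
  · rw [hq, zero_mul]
    apply Finset.sum_nonneg
    intro j _
    exact mul_nonneg (mul_nonneg (hp0 j) (hψ0 _ (by positivity))) (hf0 _)
  · have hqpos : 0 < convPow f (n + 1) m :=
      lt_of_le_of_ne (hsum ▸ Finset.sum_nonneg hw0) (Ne.symm hq)
    have hwpos : 0 < ∑ j ∈ Finset.range (m + 1), w j := hsum ▸ hqpos
    have hmem : ∀ j ∈ Finset.range (m + 1), ((j : ℝ) / (n : ℕ)) ∈ Set.Ici (0:ℝ) :=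
      fun j _ => Set.mem_Ici.mpr (by positivity)
    have hJ := hψc.map_centerMass_le hw0 hwpos hmem
    have hcm : (Finset.range (m + 1)).centerMass w (fun j => (j : ℝ) / (n : ℕ))
        = (m : ℝ) / (n + 1 : ℕ) := by
      rw [Finset.centerMass, hsum]
      have : ∑ j ∈ Finset.range (m + 1), w j • ((j : ℝ) / (n : ℕ))
          = ((n:ℝ))⁻¹ * ∑ j ∈ Finset.range (m + 1), (j : ℝ) * w j := by
        rw [Finset.mul_sum]
        apply Finset.sum_congr rfl
        intro j _
        simp only [smul_eq_mul]
        push_cast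
        ring
      rw [this, hA]
      have hn0 : (n:ℝ) ≠ 0 := Nat.cast_ne_zero.mpr (by omega)
      have hq' : convPow f (n + 1) m ≠ 0 := hq
      have hn1 : ((n:ℝ)) + 1 ≠ 0 := by positivity
      push_cast
      rw [smul_eq_mul]
      field_simp
    rw [hcm] at hJ
    calc convPow f (n + 1) m * ψ ((m : ℝ) / (n + 1 : ℕ))
        ≤ convPow f (n + 1) m *
            ((Finset.range (m + 1)).centerMass w fun j => ψ ((j : ℝ) / (n : ℕ))) := by
          apply mul_le_mul_of_nonneg_left _ hqpos.le
          exact hJ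
      _ = ∑ j ∈ Finset.range (m + 1), convPow f n j * ψ ((j : ℝ) / (n : ℕ)) * f (m - j) := by
          rw [Finset.centerMass, hsum, smul_eq_mul, ← mul_assoc, mul_inv_cancel₀ hq, one_mul]
          apply Finset.sum_congr rfl
          intro j _
          simp only [smul_eq_mul, hw]
          ring

/-- Monotonicity of `E[ψ(X̄_n)]` in `n`, in `ℝ≥0∞`. -/
lemma E_mono {f : ℕ → ℝ} (hf0 : ∀ i, 0 ≤ f i) (hf1 : SE f = 1)
    {ψ : ℝ → ℝ} (hψc : ConvexOn ℝ (Set.Ici 0) ψ) (hψ0 : ∀ x : ℝ, 0 ≤ x → 0 ≤ ψ x)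
    (n : ℕ) (hn : 1 ≤ n) :
    ∑' k : ℕ, ENNReal.ofReal (convPow f (n + 1) k * ψ ((k : ℝ) / (n + 1 : ℕ)))
      ≤ ∑' k : ℕ, ENNReal.ofReal (convPow f n k * ψ ((k : ℝ) / (n : ℕ))) := by
  set u : ℕ → ℝ := fun j => convPow f n j * ψ ((j : ℝ) / (n : ℕ)) with hu
  have hu0 : ∀ j, 0 ≤ u j := fun j =>
    mul_nonneg (convPow_nonneg hf0 n j) (hψ0 _ (by positivity))
  calc ∑' k : ℕ, ENNReal.ofReal (convPow f (n + 1) k * ψ ((k : ℝ) / (n + 1 : ℕ)))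
      ≤ ∑' m : ℕ, ENNReal.ofReal (conv u f m) := by
        apply ENNReal.tsum_le_tsum
        intro m
        apply ENNReal.ofReal_le_ofReal
        exact jensen_step hf0 hψc hψ0 n hn m
    _ = SE (conv u f) := rfl
    _ = SE u * SE f := SE_conv hu0 hf0
    _ = ∑' k : ℕ, ENNReal.ofReal (u k) := by rw [hf1, mul_one]; rfl

/-- Monotonicity along `k ≤ n`. -/
lemma E_mono_le {f : ℕ → ℝ} (hf0 : ∀ i, 0 ≤ f i) (hf1 : SE f = 1)
    {ψ : ℝ → ℝ} (hψc : ConvexOn ℝ (Set.Ici 0) ψ) (hψ0 : ∀ x : ℝ, 0 ≤ x → 0 ≤ ψ x)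
    {k n : ℕ} (hk : 1 ≤ k) (hkn : k ≤ n) :
    ∑' m : ℕ, ENNReal.ofReal (convPow f n m * ψ ((m : ℝ) / (n : ℕ)))
      ≤ ∑' m : ℕ, ENNReal.ofReal (convPow f k m * ψ ((m : ℝ) / (k : ℕ))) := by
  induction n with
  | zero => omega
  | succ n ih =>
    rcases Nat.lt_or_ge k (n + 1) with h | h
    · exact le_trans (E_mono hf0 hf1 hψc hψ0 n (by omega)) (ih (by omega))
    · have : k = n + 1 := by omega
      subst this
      exact le_rfl

/-- `LE f lam n` is the extended-real value of `E[Φ(X̄_n)]`. -/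
noncomputable def LEseq (f : ℕ → ℝ) (lam : ℝ) (n : ℕ) : ℝ≥0∞ :=
  ∑' k : ℕ, ENNReal.ofReal (convPow f n k * Phi lam ((k : ℝ) / (n : ℕ)))

section Decomp

variable {f : ℕ → ℝ} {lam : ℝ}

lemma SE_f_one (hf : IsPmf f) : SE f = 1 := by
  rw [SE, ← ofReal_tsum f hf.1 hf.2.summable, hf.2.tsum_eq, ENNReal.ofReal_one]

lemma ME_f_lam (hf : IsPmf f) (hmean : Summable (fun i : ℕ => (i : ℝ) * f i))
    (hlam : pmfMean f = lam) : ME f = ENNReal.ofReal lam := by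
  rw [ME, ← hlam, pmfMean,
    ofReal_tsum _ (fun i => mul_nonneg (Nat.cast_nonneg i) (hf.1 i)) hmean]
  apply tsum_congr
  intro i
  rw [ENNReal.ofReal_mul (Nat.cast_nonneg i), ENNReal.ofReal_natCast]

lemma summable_convPow (hf : IsPmf f) (n : ℕ) :
    Summable (convPow f n) ∧ ∑' k, convPow f n k = 1 := by
  have h1 := SE_convPow hf.1 (SE_f_one hf) n
  rw [SE] at h1
  have hs : Summable (convPow f n) :=
    (summable_iff_SE _ (convPow_nonneg hf.1 n)).mpr (by rw [h1]; exact ENNReal.one_ne_top)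
  refine ⟨hs, ?_⟩
  have := tsum_toReal (convPow f n) (convPow_nonneg hf.1 n) (by rw [h1]; exact ENNReal.one_ne_top)
  rw [h1] at this
  simpa using this.symm

lemma summable_mean_convPow (hf : IsPmf f) (hmean : Summable (fun i : ℕ => (i : ℝ) * f i))
    (hlam : pmfMean f = lam) (hpos : 0 < lam) (n : ℕ) :
    Summable (fun k : ℕ => (k : ℝ) * convPow f n k)
      ∧ ∑' k : ℕ, (k : ℝ) * convPow f n k = n * lam := by
  have hme := ME_convPow hf.1 (SE_f_one hf) n
  rw [ME_f_lam hf hmean hlam] at hme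
  have heq : ∀ k : ℕ, (k : ℝ≥0∞) * ENNReal.ofReal (convPow f n k)
      = ENNReal.ofReal ((k : ℝ) * convPow f n k) := by
    intro k
    rw [ENNReal.ofReal_mul (Nat.cast_nonneg k), ENNReal.ofReal_natCast]
  have hme' : ∑' k : ℕ, ENNReal.ofReal ((k : ℝ) * convPow f n k)
      = (n : ℝ≥0∞) * ENNReal.ofReal lam := by
    rw [← hme, ME]
    exact (tsum_congr heq).symm
  have hfin : (∑' k : ℕ, ENNReal.ofReal ((k : ℝ) * convPow f n k)) ≠ ⊤ := by
    rw [hme']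
    exact ENNReal.mul_ne_top (ENNReal.natCast_ne_top n) ENNReal.ofReal_ne_top
  have hnn : ∀ k : ℕ, 0 ≤ (k : ℝ) * convPow f n k :=
    fun k => mul_nonneg (Nat.cast_nonneg k) (convPow_nonneg hf.1 n k)
  refine ⟨(summable_iff_SE _ hnn).mpr hfin, ?_⟩
  have ht := tsum_toReal _ hnn hfin
  rw [hme'] at ht
  rw [← ht, ENNReal.toReal_mul, ENNReal.toReal_natCast, ENNReal.toReal_ofReal hpos.le]

/-- Decomposition `lTerm n k = p_k Φ(k/n) + h k` with `h` summable to `0`. -/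
lemma lTerm_decomp (hf : IsPmf f) (hmean : Summable (fun i : ℕ => (i : ℝ) * f i))
    (hlam : pmfMean f = lam) (hpos : 0 < lam) (n : ℕ) (hn : 1 ≤ n) :
    ∃ h : ℕ → ℝ, Summable h ∧ (∑' k, h k) = 0 ∧
      ∀ k, lTerm f lam n k = convPow f n k * Phi lam ((k : ℝ) / (n : ℕ)) + h k := by
  set p := convPow f n with hp
  refine ⟨fun k => (k : ℝ) / n * p k - lam * p k, ?_, ?_, ?_⟩
  · apply Summable.sub
    · have := (summable_mean_convPow hf hmean hlam hpos n).1
      exact (this.div_const (n : ℝ)).congr fun k => by ring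
    · exact ((summable_convPow hf n).1.mul_left lam)
  · rw [Summable.tsum_sub]
    · have h1 : ∑' k : ℕ, (k : ℝ) / n * p k = n * lam / n := by
        rw [← (summable_mean_convPow hf hmean hlam hpos n).2, ← tsum_div_const]
        exact tsum_congr fun k => by ring
      have h2 : ∑' k : ℕ, lam * p k = lam := by
        rw [tsum_mul_left, (summable_convPow hf n).2, mul_one]
      rw [h1, h2]
      have hn0 : (n : ℝ) ≠ 0 := Nat.cast_ne_zero.mpr (by omega)
      field_simp
      ring
    · have := (summable_mean_convPow hf hmean hlam hpos n).1
      exact (this.div_const (n : ℝ)).congr fun k => by ring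
    · exact ((summable_convPow hf n).1.mul_left lam)
  · intro k
    unfold lTerm Phi
    rw [← hp]
    have : (k : ℝ) / (n * lam) = (k : ℝ) / n / lam := by rw [div_div]
    rw [this]
    ring

end Decomp
section Main
variable {f : ℕ → ℝ} {lam : ℝ}

lemma lSeq_eq_LEseq (hf : IsPmf f) (hmean : Summable (fun i : ℕ => (i : ℝ) * f i))
    (hlam : pmfMean f = lam) (hpos : 0 < lam) (n : ℕ) (hn : 1 ≤ n) :
    lSeq f lam n = LEseq f lam n := by
  obtain ⟨h, hs, h0, hdec⟩ := lTerm_decomp hf hmean hlam hpos n hn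
  set g : ℕ → ℝ := fun k => convPow f n k * Phi lam ((k : ℝ) / (n : ℕ)) with hg
  have hg0 : ∀ k, 0 ≤ g k := fun k =>
    mul_nonneg (convPow_nonneg hf.1 n k) (Phi_nonneg hpos (by positivity))
  by_cases hS : Summable (lTerm f lam n)
  · have hgs : Summable g := by
      have := hS.sub hs
      exact this.congr fun k => by rw [hdec k]; ring
    rw [lSeq, if_pos hS]
    have h1 : ∑' k, lTerm f lam n k = ∑' k, g k := by
      rw [tsum_congr hdec, Summable.tsum_add hgs hs, h0, add_zero]
    rw [h1, LEseq, ofReal_tsum g hg0 hgs]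
  · rw [lSeq, if_neg hS, LEseq]
    symm
    by_contra hne
    exact hS (((((summable_iff_SE g hg0).mpr hne)).add hs).congr fun k => (hdec k).symm)

lemma part1 (hf : IsPmf f) (hmean : Summable (fun i : ℕ => (i : ℝ) * f i))
    (hlam : pmfMean f = lam) (hpos : 0 < lam) (n : ℕ) (hn : 1 ≤ n)
    (hS : Summable (lTerm f lam n)) : 0 ≤ ∑' k : ℕ, lTerm f lam n k := by
  obtain ⟨h, hs, h0, hdec⟩ := lTerm_decomp hf hmean hlam hpos n hn
  set g : ℕ → ℝ := fun k => convPow f n k * Phi lam ((k : ℝ) / (n : ℕ)) with hg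
  have hg0 : ∀ k, 0 ≤ g k := fun k =>
    mul_nonneg (convPow_nonneg hf.1 n k) (Phi_nonneg hpos (by positivity))
  have hgs : Summable g := by
    have := hS.sub hs
    exact this.congr fun k => by rw [hdec k]; ring
  rw [tsum_congr hdec, Summable.tsum_add hgs hs, h0, add_zero]
  exact tsum_nonneg hg0

lemma part2 (hf : IsPmf f) (hmean : Summable (fun i : ℕ => (i : ℝ) * f i))
    (hlam : pmfMean f = lam) (hpos : 0 < lam) (n : ℕ) (hn : 2 ≤ n) :
    lSeq f lam n ≤ lSeq f lam (n - 1) := by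
  rw [lSeq_eq_LEseq hf hmean hlam hpos n (by omega),
    lSeq_eq_LEseq hf hmean hlam hpos (n - 1) (by omega)]
  have key := E_mono hf.1 (SE_f_one hf) (Phi_convexOn hpos)
    (fun x hx => Phi_nonneg hpos hx) (n - 1) (by omega)
  have hn1 : n - 1 + 1 = n := by omega
  rw [hn1] at key
  exact key

end Main
section Part3
open Classical in
/-- Single-coordinate pushforward. -/
lemma push_tsum (u : ℕ → ℝ) (g : ℕ → ℕ) (v : ℕ → ℝ)
    (hv : ∀ j, ENNReal.ofReal (v j) = ∑' k : ℕ, (if g k = j then ENNReal.ofReal (u k) else 0))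
    (φ : ℕ → ℝ≥0∞) :
    ∑' k : ℕ, ENNReal.ofReal (u k) * φ (g k) = ∑' j : ℕ, ENNReal.ofReal (v j) * φ j := by
  have h1 : ∀ j, ENNReal.ofReal (v j) * φ j
      = ∑' k : ℕ, (if g k = j then ENNReal.ofReal (u k) * φ j else 0) := by
    intro j
    rw [hv j, ← ENNReal.tsum_mul_right]
    apply tsum_congr
    intro k
    rw [ite_mul, zero_mul]
  simp_rw [h1]
  rw [ENNReal.tsum_comm]
  apply tsum_congr
  intro k
  have h2 : ∀ j, (if g k = j then ENNReal.ofReal (u k) * φ j else 0)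
      = (if j = g k then ENNReal.ofReal (u k) * φ (g k) else 0) := by
    intro j
    by_cases h : g k = j
    · rw [if_pos h, if_pos h.symm, h]
    · rw [if_neg h, if_neg (Ne.symm h)]
  simp_rw [h2]
  rw [tsum_ite_eq]

open Classical in
/-- Product-space representation with pushforward: the law of `∑ g(X_i)` is `convPow v n`. -/
lemma prod_push (u : ℕ → ℝ) (hu : ∀ i, 0 ≤ u i) (g : ℕ → ℕ) (v : ℕ → ℝ) (hv0 : ∀ i, 0 ≤ v i)
    (hv : ∀ j, ENNReal.ofReal (v j) = ∑' k : ℕ, (if g k = j then ENNReal.ofReal (u k) else 0))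
    (n : ℕ) (φ : ℕ → ℝ≥0∞) :
    ∑' x : Fin n → ℕ, (∏ i, ENNReal.ofReal (u (x i))) * φ (∑ i, g (x i))
      = ∑' m : ℕ, ENNReal.ofReal (convPow v n m) * φ m := by
  induction n generalizing φ with
  | zero =>
    rw [tsum_eq_single (fun i => Fin.elim0 i) (by intro x hx; exact absurd (funext fun i => Fin.elim0 i) (Ne.symm hx))]
    rw [tsum_eq_single 0 (by
      intro m hm
      simp [convPow, hm])]
    simp [convPow]
  | succ n ih =>
    set p := convPow v n with hp
    have hstep : ∑' x : Fin (n+1) → ℕ, (∏ i, ENNReal.ofReal (u (x i))) * φ (∑ i, g (x i))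
        = ∑' a : ℕ, ENNReal.ofReal (u a)
            * ∑' m : ℕ, ENNReal.ofReal (p m) * φ (g a + m) := by
      rw [← (Fin.consEquiv (fun _ : Fin (n+1) => ℕ)).tsum_eq]
      rw [ENNReal.tsum_prod']
      apply tsum_congr
      intro a
      have hxa : ∀ x : Fin n → ℕ,
          ((Fin.consEquiv (fun _ : Fin (n+1) => ℕ)) (a, x)) = Fin.cons a x := fun x => rfl
      calc ∑' x : Fin n → ℕ, (∏ i, ENNReal.ofReal (u ((Fin.cons a x : Fin (n+1) → ℕ) i)))
              * φ (∑ i, g ((Fin.cons a x : Fin (n+1) → ℕ) i))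
          = ∑' x : Fin n → ℕ, ENNReal.ofReal (u a)
              * ((∏ i, ENNReal.ofReal (u (x i))) * φ (g a + ∑ i, g (x i))) := by
            apply tsum_congr
            intro x
            rw [Fin.prod_univ_succ, Fin.sum_univ_succ]
            simp only [Fin.cons_zero, Fin.cons_succ]
            rw [mul_assoc]
        _ = ENNReal.ofReal (u a) * ∑' m : ℕ, ENNReal.ofReal (p m) * φ (g a + m) := by
            rw [ENNReal.tsum_mul_left, ih (fun m => φ (g a + m))]
    rw [hstep]
    have hpush := push_tsum u g v hv
      (fun t => ∑' m : ℕ, ENNReal.ofReal (p m) * φ (t + m))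
    rw [hpush]
    -- now reassemble into the convolution
    show _ = ∑' m : ℕ, ENNReal.ofReal (conv p v m) * φ m
    have hT := toolT (fun j k => ENNReal.ofReal (p j) * ENNReal.ofReal (v k) * φ (j + k))
    have hL : ∑' m : ℕ, ENNReal.ofReal (conv p v m) * φ m
        = ∑' m : ℕ, ∑ j ∈ Finset.range (m + 1),
            ENNReal.ofReal (p j) * ENNReal.ofReal (v (m - j)) * φ (j + (m - j)) := by
      apply tsum_congr
      intro m
      rw [ofReal_conv p v (convPow_nonneg hv0 n) hv0, Finset.sum_mul]
      apply Finset.sum_congr rfl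
      intro j hj
      have hjm : j ≤ m := Nat.lt_succ_iff.mp (Finset.mem_range.mp hj)
      rw [ENNReal.ofReal_mul (convPow_nonneg hv0 n j), Nat.add_sub_cancel' hjm]
    rw [hL, hT]
    rw [ENNReal.tsum_comm]
    apply tsum_congr
    intro b
    rw [← ENNReal.tsum_mul_left]
    apply tsum_congr
    intro m
    rw [Nat.add_comm m b]
    ring

end Part3
section Trunc
variable {f : ℕ → ℝ}

noncomputable def trY (f : ℕ → ℝ) (K : ℕ) (j : ℕ) : ℝ :=
  if j < K then f j else if j = K then ∑' i : ℕ, f (i + K) else 0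

noncomputable def trZ (f : ℕ → ℝ) (K : ℕ) (j : ℕ) : ℝ :=
  if j = 0 then ∑ i ∈ Finset.range (K + 1), f i else f (j + K)

lemma trY_nonneg (hf0 : ∀ i, 0 ≤ f i) (K j : ℕ) : 0 ≤ trY f K j := by
  unfold trY
  split_ifs with h1 h2
  · exact hf0 j
  · exact tsum_nonneg fun i => hf0 _
  · exact le_refl 0

lemma trZ_nonneg (hf0 : ∀ i, 0 ≤ f i) (K j : ℕ) : 0 ≤ trZ f K j := by
  unfold trZ
  split_ifs with h1
  · exact Finset.sum_nonneg fun i _ => hf0 i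
  · exact hf0 _

lemma trY_push (hf : IsPmf f) (K : ℕ) (j : ℕ) :
    ENNReal.ofReal (trY f K j)
      = ∑' k : ℕ, (if min k K = j then ENNReal.ofReal (f k) else 0) := by
  rcases lt_trichotomy j K with h | h | h
  · rw [tsum_eq_single j (by intro k hk; rw [if_neg (by omega)])]
    rw [if_pos (by omega), trY, if_pos h]
  · subst h
    have hinj : Function.Injective (fun i : ℕ => i + j) := fun a b h => by
      simpa using h
    have hsupp : (Function.support fun k => (if min k j = j then ENNReal.ofReal (f k) else 0))
        ⊆ Set.range (fun i : ℕ => i + j) := by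
      intro k hk
      by_cases h : min k j = j
      · have hjk : j ≤ k := by omega
        exact ⟨k - j, by show k - j + j = k; omega⟩
      · rw [Function.mem_support, if_neg h] at hk
        exact absurd rfl hk
    rw [← hinj.tsum_eq hsupp]
    have : ∀ i : ℕ, (if min (i + j) j = j then ENNReal.ofReal (f (i + j)) else 0)
        = ENNReal.ofReal (f (i + j)) := fun i => if_pos (by omega)
    rw [tsum_congr this, ← ofReal_tsum _ (fun i => hf.1 _)
      ((summable_nat_add_iff j).mpr hf.2.summable)]
    rw [trY, if_neg (by omega), if_pos rfl]
  · rw [ENNReal.summable.tsum_eq_zero_iff |>.mpr (by intro k; rw [if_neg (by omega)])]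
    rw [trY, if_neg (by omega), if_neg (by omega), ENNReal.ofReal_zero]

lemma trZ_push (hf : IsPmf f) (K : ℕ) (j : ℕ) :
    ENNReal.ofReal (trZ f K j)
      = ∑' k : ℕ, (if k - K = j then ENNReal.ofReal (f k) else 0) := by
  rcases Nat.eq_zero_or_pos j with h | h
  · subst h
    rw [tsum_eq_sum (s := Finset.range (K + 1))
      (by intro k hk; rw [if_neg (by simp at hk; omega)])]
    rw [trZ, if_pos rfl, ENNReal.ofReal_sum_of_nonneg (fun i _ => hf.1 i)]
    apply Finset.sum_congr rfl
    intro k hk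
    rw [if_pos (by simp at hk; omega)]
  · rw [tsum_eq_single (j + K) (by intro k hk; rw [if_neg (by omega)])]
    rw [if_pos (by omega), trZ, if_neg (by omega)]

end Trunc
section TruncFacts
variable {f : ℕ → ℝ} {lam : ℝ}

lemma SE_push {u v : ℕ → ℝ} (g : ℕ → ℕ)
    (hv : ∀ j, ENNReal.ofReal (v j) = ∑' k : ℕ, (if g k = j then ENNReal.ofReal (u k) else 0)) :
    SE v = SE u := by
  have := push_tsum u g v hv (fun _ => 1)
  simp only [mul_one] at this
  exact this.symm

lemma SE_trY (hf : IsPmf f) (K : ℕ) : SE (trY f K) = 1 := by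
  rw [SE_push (fun k => min k K) (trY_push hf K), SE_f_one hf]

lemma SE_trZ (hf : IsPmf f) (K : ℕ) : SE (trZ f K) = 1 := by
  rw [SE_push (fun k => k - K) (trZ_push hf K), SE_f_one hf]

lemma ME_push {u v : ℕ → ℝ} (g : ℕ → ℕ)
    (hv : ∀ j, ENNReal.ofReal (v j) = ∑' k : ℕ, (if g k = j then ENNReal.ofReal (u k) else 0)) :
    ME v = ∑' k : ℕ, ENNReal.ofReal (u k) * (g k : ℝ≥0∞) := by
  have h := push_tsum u g v hv (fun j => (j : ℝ≥0∞))
  rw [ME]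
  rw [show (∑' i : ℕ, (i : ℝ≥0∞) * ENNReal.ofReal (v i))
      = ∑' j : ℕ, ENNReal.ofReal (v j) * (j : ℝ≥0∞) from tsum_congr fun j => mul_comm _ _, ← h]

lemma ME_trZ_le (hf : IsPmf f) (hmean : Summable (fun i : ℕ => (i : ℝ) * f i)) (K : ℕ) :
    ME (trZ f K) ≤ ENNReal.ofReal (∑' i : ℕ, ((i + K : ℕ) : ℝ) * f (i + K)) := by
  rw [ME_push (fun k => k - K) (trZ_push hf K)]
  have hinj : Function.Injective (fun i : ℕ => i + K) := fun a b h => by simpa using h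
  have hsupp : (Function.support fun k => ENNReal.ofReal (f k) * ((k - K : ℕ) : ℝ≥0∞))
      ⊆ Set.range (fun i : ℕ => i + K) := by
    intro k hk
    rcases Nat.lt_or_ge k K with h | h
    · rw [Function.mem_support] at hk
      exact absurd (by rw [Nat.sub_eq_zero_of_le h.le]; simp) hk
    · exact ⟨k - K, by show k - K + K = k; omega⟩
  rw [← hinj.tsum_eq hsupp]
  have hsummable : Summable (fun i : ℕ => ((i + K : ℕ) : ℝ) * f (i + K)) :=
    (summable_nat_add_iff K).mpr hmean
  rw [ofReal_tsum _ (fun i => mul_nonneg (Nat.cast_nonneg _) (hf.1 _)) hsummable]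
  apply ENNReal.tsum_le_tsum
  intro i
  show ENNReal.ofReal (f (i + K)) * ((i + K - K : ℕ) : ℝ≥0∞) ≤ _
  rw [Nat.add_sub_cancel, ENNReal.ofReal_mul (Nat.cast_nonneg _), ENNReal.ofReal_natCast,
    mul_comm]
  exact mul_le_mul_left (Nat.cast_le.mpr (by omega)) _

lemma ME_trY_add_trZ (hf : IsPmf f) (hmean : Summable (fun i : ℕ => (i : ℝ) * f i))
    (hlam : pmfMean f = lam) (K : ℕ) :
    ME (trY f K) + ME (trZ f K) = ENNReal.ofReal lam := by
  rw [ME_push (fun k => min k K) (trY_push hf K), ME_push (fun k => k - K) (trZ_push hf K),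
    ← ENNReal.tsum_add, ← ME_f_lam hf hmean hlam, ME]
  apply tsum_congr
  intro k
  rw [← mul_add, ← Nat.cast_add]
  have : min k K + (k - K) = k := by omega
  rw [this, mul_comm]

lemma ME_trY_fin (hf : IsPmf f) (hmean : Summable (fun i : ℕ => (i : ℝ) * f i))
    (hlam : pmfMean f = lam) (K : ℕ) : ME (trY f K) ≠ ⊤ := by
  intro h
  have := ME_trY_add_trZ hf hmean hlam (lam := lam) K
  rw [h, top_add] at this
  exact ENNReal.ofReal_ne_top this.symm

lemma ME_trZ_fin (hf : IsPmf f) (hmean : Summable (fun i : ℕ => (i : ℝ) * f i)) (K : ℕ) :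
    ME (trZ f K) ≠ ⊤ := by
  intro h
  have hle := ME_trZ_le hf hmean K
  rw [h] at hle
  exact ENNReal.ofReal_ne_top (top_le_iff.mp hle)

end TruncFacts
section M2
noncomputable def M2E (u : ℕ → ℝ) : ℝ≥0∞ := ∑' k : ℕ, (k : ℝ≥0∞) ^ 2 * ENNReal.ofReal (u k)

lemma M2E_conv {u v : ℕ → ℝ} (hu : ∀ i, 0 ≤ u i) (hv : ∀ i, 0 ≤ v i) :
    M2E (conv u v) = M2E u * SE v + 2 * (ME u * ME v) + SE u * M2E v := by
  have key := toolT_mul u v hu hv (fun j k => ((j : ℝ≥0∞) + (k : ℝ≥0∞)) ^ 2)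
  have lhs : (∑' m : ℕ, (m : ℝ≥0∞) ^ 2 * ENNReal.ofReal (conv u v m))
      = ∑' m : ℕ, ∑ j ∈ Finset.range (m + 1),
          ENNReal.ofReal (u j * v (m - j)) * (((j : ℝ≥0∞)) + ((m - j : ℕ) : ℝ≥0∞)) ^ 2 := by
    apply tsum_congr; intro m
    rw [ofReal_conv u v hu hv m, Finset.mul_sum]
    apply Finset.sum_congr rfl
    intro j hj
    have hjm : j ≤ m := Nat.lt_succ_iff.mp (Finset.mem_range.mp hj)
    rw [mul_comm]
    congr 2
    rw [← Nat.cast_add]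
    congr 1
    omega
  rw [M2E, lhs, key]
  have expand : ∀ j k : ℕ,
      ENNReal.ofReal (u j) * ENNReal.ofReal (v k) * ((j : ℝ≥0∞) + (k : ℝ≥0∞)) ^ 2
      = (j : ℝ≥0∞) ^ 2 * ENNReal.ofReal (u j) * ENNReal.ofReal (v k)
        + (2 * ((j : ℝ≥0∞) * ENNReal.ofReal (u j))) * ((k : ℝ≥0∞) * ENNReal.ofReal (v k))
        + ENNReal.ofReal (u j) * ((k : ℝ≥0∞) ^ 2 * ENNReal.ofReal (v k)) := by
    intro j k; ring
  calc ∑' (j : ℕ) (k : ℕ),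
        ENNReal.ofReal (u j) * ENNReal.ofReal (v k) * ((j : ℝ≥0∞) + (k : ℝ≥0∞)) ^ 2
      = ∑' (j : ℕ),
          ((∑' k : ℕ, (j : ℝ≥0∞) ^ 2 * ENNReal.ofReal (u j) * ENNReal.ofReal (v k))
            + ∑' k : ℕ, (2 * ((j : ℝ≥0∞) * ENNReal.ofReal (u j))) * ((k : ℝ≥0∞) * ENNReal.ofReal (v k))
            + ∑' k : ℕ, ENNReal.ofReal (u j) * ((k : ℝ≥0∞) ^ 2 * ENNReal.ofReal (v k))) := by
        apply tsum_congr; intro j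
        rw [← ENNReal.tsum_add, ← ENNReal.tsum_add]
        exact tsum_congr fun k => expand j k
    _ = ∑' (j : ℕ),
          ((j : ℝ≥0∞) ^ 2 * ENNReal.ofReal (u j) * SE v
            + ((2 * ((j : ℝ≥0∞) * ENNReal.ofReal (u j))) * ME v
            + ENNReal.ofReal (u j) * M2E v)) := by
        apply tsum_congr; intro j
        rw [ENNReal.tsum_mul_left, ENNReal.tsum_mul_left, ENNReal.tsum_mul_left]
        rw [add_assoc]
        rfl
    _ = M2E u * SE v + 2 * (ME u * ME v) + SE u * M2E v := by
        rw [ENNReal.tsum_add, ENNReal.tsum_add, ENNReal.tsum_mul_right, ENNReal.tsum_mul_right,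
          ENNReal.tsum_mul_right,
          show (∑' j : ℕ, 2 * ((j:ℝ≥0∞) * ENNReal.ofReal (u j))) = 2 * ME u by
            rw [ENNReal.tsum_mul_left]; rfl,
          mul_assoc]
        exact (add_assoc _ _ _).symm

lemma M2E_convPow {u : ℕ → ℝ} (hu : ∀ i, 0 ≤ u i) (hse : SE u = 1) (n : ℕ) :
    M2E (convPow u n) = n * M2E u + ((n * (n - 1) : ℕ) : ℝ≥0∞) * (ME u) ^ 2 := by
  induction n with
  | zero =>
    rw [M2E, tsum_eq_single 0 (by intro b hb; simp [convPow, hb])]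
    simp [convPow]
  | succ n ih =>
    show M2E (conv (convPow u n) u) = _
    rw [M2E_conv (convPow_nonneg hu n) hu, ih, SE_convPow hu hse, ME_convPow hu hse, hse]
    have hco : ((n + 1) * (n + 1 - 1) : ℕ) = (n * (n - 1) + 2 * n : ℕ) := by
      cases n <;> simp <;> ring_nf <;> omega
    rw [hco]
    push_cast
    ring

lemma convPow_bdd {u : ℕ → ℝ} {K : ℕ} (h : ∀ j, K < j → u j = 0) (n : ℕ) :
    ∀ m, n * K < m → convPow u n m = 0 := by
  induction n with
  | zero => intro m hm; simp only [convPow]; rw [if_neg (by omega)]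
  | succ n ih =>
    intro m hm
    show conv (convPow u n) u m = 0
    rw [conv]
    apply Finset.sum_eq_zero
    intro j hj
    have hexp : (n + 1) * K = n * K + K := by ring
    rcases Nat.lt_or_ge (n * K) j with h1 | h1
    · rw [ih j h1, zero_mul]
    · rw [h (m - j) (by simp at hj; omega), mul_zero]

lemma SE_fin {u : ℕ → ℝ} {K : ℕ} (hu : ∀ i, 0 ≤ u i) (h : ∀ j, K < j → u j = 0) :
    SE u = ENNReal.ofReal (∑ j ∈ Finset.range (K + 1), u j) := by
  rw [SE, tsum_eq_sum (s := Finset.range (K + 1))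
    (by intro j hj; rw [h j (by simp at hj; omega), ENNReal.ofReal_zero]),
    ENNReal.ofReal_sum_of_nonneg (fun j _ => hu j)]

lemma ME_fin {u : ℕ → ℝ} {K : ℕ} (hu : ∀ i, 0 ≤ u i) (h : ∀ j, K < j → u j = 0) :
    ME u = ENNReal.ofReal (∑ j ∈ Finset.range (K + 1), (j : ℝ) * u j) := by
  rw [ME, tsum_eq_sum (s := Finset.range (K + 1))
    (by intro j hj; rw [h j (by simp at hj; omega), ENNReal.ofReal_zero, mul_zero]),
    ENNReal.ofReal_sum_of_nonneg (fun j _ => mul_nonneg (Nat.cast_nonneg j) (hu j))]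
  apply Finset.sum_congr rfl
  intro j _
  rw [ENNReal.ofReal_mul (Nat.cast_nonneg j), ENNReal.ofReal_natCast]

lemma M2E_fin {u : ℕ → ℝ} {K : ℕ} (hu : ∀ i, 0 ≤ u i) (h : ∀ j, K < j → u j = 0) :
    M2E u = ENNReal.ofReal (∑ j ∈ Finset.range (K + 1), (j : ℝ) ^ 2 * u j) := by
  rw [M2E, tsum_eq_sum (s := Finset.range (K + 1))
    (by intro j hj; rw [h j (by simp at hj; omega), ENNReal.ofReal_zero, mul_zero]),
    ENNReal.ofReal_sum_of_nonneg (fun j _ => mul_nonneg (by positivity) (hu j))]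
  apply Finset.sum_congr rfl
  intro j _
  rw [ENNReal.ofReal_mul (by positivity), ← ENNReal.ofReal_natCast j, ← ENNReal.ofReal_pow (Nat.cast_nonneg j)]

end M2
section Cheby
open Classical

lemma markov_bound (u : ℕ → ℝ) (a : ℝ) (ha : 0 < a) :
    ∑' m : ℕ, ENNReal.ofReal (u m) * (if a ≤ (m : ℝ) then 1 else 0)
      ≤ ME u / ENNReal.ofReal a := by
  have hstep : ∀ m : ℕ, ENNReal.ofReal (u m) * (if a ≤ (m : ℝ) then 1 else 0)
      ≤ ((m : ℝ≥0∞) * ENNReal.ofReal (u m)) / ENNReal.ofReal a := by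
    intro m
    by_cases h : a ≤ (m : ℝ)
    · rw [if_pos h, mul_one]
      rw [ENNReal.le_div_iff_mul_le (Or.inl (by simp [ha])) (Or.inl ENNReal.ofReal_ne_top)]
      calc ENNReal.ofReal (u m) * ENNReal.ofReal a
          ≤ ENNReal.ofReal (u m) * (m : ℝ≥0∞) := by
            apply mul_le_mul_right
            rw [← ENNReal.ofReal_natCast m]
            exact ENNReal.ofReal_le_ofReal h
        _ = (m : ℝ≥0∞) * ENNReal.ofReal (u m) := mul_comm _ _
    · rw [if_neg h, mul_zero]
      exact zero_le
  calc ∑' m : ℕ, ENNReal.ofReal (u m) * (if a ≤ (m : ℝ) then 1 else 0)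
      ≤ ∑' m : ℕ, ((m : ℝ≥0∞) * ENNReal.ofReal (u m)) / ENNReal.ofReal a :=
        ENNReal.tsum_le_tsum hstep
    _ = ME u / ENNReal.ofReal a := by
        simp_rw [div_eq_mul_inv]
        rw [ENNReal.tsum_mul_right]
        rfl

lemma ofReal_eq_one_toReal {x : ℝ} (hx : 0 ≤ x) (h : ENNReal.ofReal x = 1) : x = 1 := by
  have := congrArg ENNReal.toReal h
  rwa [ENNReal.toReal_ofReal hx, ENNReal.toReal_one] at this

lemma ofReal_inj_nonneg {x y : ℝ} (hx : 0 ≤ x) (hy : 0 ≤ y)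
    (h : ENNReal.ofReal x = ENNReal.ofReal y) : x = y := by
  have := congrArg ENNReal.toReal h
  rwa [ENNReal.toReal_ofReal hx, ENNReal.toReal_ofReal hy] at this

lemma chebyshev_bound {u : ℕ → ℝ} {K : ℕ} (hu0 : ∀ i, 0 ≤ u i) (hse : SE u = 1)
    (hK : ∀ j, K < j → u j = 0) {μ : ℝ} (hμ : ME u = ENNReal.ofReal μ) (hμ0 : 0 ≤ μ)
    (n : ℕ) (hn : 1 ≤ n) (δ : ℝ) (hδ : 0 < δ) :
    ∑' m : ℕ, ENNReal.ofReal (convPow u n m) * (if δ ≤ |(m : ℝ) / n - μ| then 1 else 0)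
      ≤ ENNReal.ofReal ((K : ℝ) ^ 2 / (n * δ ^ 2)) := by
  set q := convPow u n with hq
  have hq0 : ∀ m, 0 ≤ q m := convPow_nonneg hu0 n
  have hqbdd : ∀ m, n * K < m → q m = 0 := convPow_bdd hK n
  set R := n * K with hR
  have hn0 : (n : ℝ) ≠ 0 := Nat.cast_ne_zero.mpr (by omega)
  have hnpos : (0:ℝ) < n := by positivity
  -- real moments of u
  set M2u := ∑ j ∈ Finset.range (K + 1), (j : ℝ) ^ 2 * u j with hM2u
  set S0u := ∑ j ∈ Finset.range (K + 1), u j with hS0u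
  have hS0u1 : S0u = 1 :=
    ofReal_eq_one_toReal (Finset.sum_nonneg fun j _ => hu0 j) (by rw [← SE_fin hu0 hK]; exact hse)
  have hM2uK : M2u ≤ (K : ℝ) ^ 2 := by
    calc M2u ≤ ∑ j ∈ Finset.range (K + 1), (K : ℝ) ^ 2 * u j := by
          apply Finset.sum_le_sum
          intro j hj
          apply mul_le_mul_of_nonneg_right _ (hu0 j)
          have : (j : ℝ) ≤ (K : ℝ) := Nat.cast_le.mpr (by simp at hj; omega)
          nlinarith [Nat.cast_nonneg (α := ℝ) j]
      _ = (K : ℝ) ^ 2 := by rw [← Finset.mul_sum, ← hS0u, hS0u1, mul_one]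
  have hμ' : ME u = ENNReal.ofReal (∑ j ∈ Finset.range (K + 1), (j : ℝ) * u j) :=
    ME_fin hu0 hK
  have hμeq : (∑ j ∈ Finset.range (K + 1), (j : ℝ) * u j) = μ :=
    ofReal_inj_nonneg (Finset.sum_nonneg fun j _ => mul_nonneg (Nat.cast_nonneg j) (hu0 j))
      hμ0 (by rw [← hμ', hμ])
  -- real moments of q
  set S0 := ∑ m ∈ Finset.range (R + 1), q m with hS0
  set S1 := ∑ m ∈ Finset.range (R + 1), (m : ℝ) * q m with hS1
  set S2 := ∑ m ∈ Finset.range (R + 1), (m : ℝ) ^ 2 * q m with hS2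
  have hS0nn : 0 ≤ S0 := Finset.sum_nonneg fun m _ => hq0 m
  have hS1nn : 0 ≤ S1 := Finset.sum_nonneg fun m _ => mul_nonneg (Nat.cast_nonneg m) (hq0 m)
  have hS2nn : 0 ≤ S2 := Finset.sum_nonneg fun m _ => mul_nonneg (by positivity) (hq0 m)
  have hS0e : S0 = 1 := by
    apply ofReal_eq_one_toReal hS0nn
    rw [← SE_fin hq0 hqbdd]
    exact SE_convPow hu0 hse n
  have hS1e : S1 = n * μ := by
    apply ofReal_inj_nonneg hS1nn (mul_nonneg (Nat.cast_nonneg n) hμ0)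
    rw [← ME_fin hq0 hqbdd]
    show ME q = _
    rw [ME_convPow hu0 hse n, hμ, ← ENNReal.ofReal_natCast n,
      ← ENNReal.ofReal_mul (Nat.cast_nonneg n)]
  have hM2unn : 0 ≤ M2u := Finset.sum_nonneg fun j _ => mul_nonneg (by positivity) (hu0 j)
  have hS2e : S2 = n * M2u + ((n * (n - 1) : ℕ) : ℝ) * μ ^ 2 := by
    apply ofReal_inj_nonneg hS2nn (add_nonneg (mul_nonneg (Nat.cast_nonneg n) hM2unn)
      (mul_nonneg (Nat.cast_nonneg _) (sq_nonneg μ)))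
    rw [← M2E_fin hq0 hqbdd]
    show M2E q = _
    rw [M2E_convPow hu0 hse n, hμ, M2E_fin hu0 hK, ← hM2u]
    rw [← ENNReal.ofReal_pow hμ0, ← ENNReal.ofReal_natCast n,
      ← ENNReal.ofReal_natCast (n * (n-1)),
      ← ENNReal.ofReal_mul (Nat.cast_nonneg n),
      ← ENNReal.ofReal_mul (Nat.cast_nonneg (n * (n-1))),
      ← ENNReal.ofReal_add (mul_nonneg (Nat.cast_nonneg n) hM2unn)
        (mul_nonneg (Nat.cast_nonneg _) (sq_nonneg μ))]
  -- the centered second moment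
  have hcent : ∑ m ∈ Finset.range (R + 1), ((m : ℝ) - n * μ) ^ 2 * q m ≤ n * (K : ℝ) ^ 2 := by
    have hexp : ∑ m ∈ Finset.range (R + 1), ((m : ℝ) - n * μ) ^ 2 * q m
        = S2 - 2 * (n * μ) * S1 + (n * μ) ^ 2 * S0 := by
      rw [hS2, hS1, hS0, Finset.mul_sum, Finset.mul_sum, ← Finset.sum_sub_distrib,
        ← Finset.sum_add_distrib]
      apply Finset.sum_congr rfl
      intro m _
      ring
    rw [hexp, hS0e, hS1e, hS2e]
    have hcast : ((n * (n - 1) : ℕ) : ℝ) = (n : ℝ) ^ 2 - n := by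
      cases n with
      | zero => simp
      | succ k =>
        rw [Nat.succ_sub_one]
        push_cast
        ring
    rw [hcast]
    nlinarith [hM2uK, hnpos, sq_nonneg μ, mul_nonneg hnpos.le (sq_nonneg μ)]
  -- chebyshev chain
  calc ∑' m : ℕ, ENNReal.ofReal (q m) * (if δ ≤ |(m : ℝ) / n - μ| then 1 else 0)
      ≤ ∑' m : ℕ, ENNReal.ofReal (q m * (((m : ℝ) / n - μ) / δ) ^ 2) := by
        apply ENNReal.tsum_le_tsum
        intro m
        by_cases h : δ ≤ |(m : ℝ) / n - μ|
        · rw [if_pos h, mul_one]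
          apply ENNReal.ofReal_le_ofReal
          have hsq : δ ^ 2 ≤ ((m : ℝ) / n - μ) ^ 2 := by
            nlinarith [sq_abs ((m : ℝ) / n - μ), abs_nonneg ((m : ℝ) / n - μ)]
          rw [div_pow]
          have h1 : (1:ℝ) ≤ ((m : ℝ) / n - μ) ^ 2 / δ ^ 2 := (one_le_div (by positivity)).mpr hsq
          nlinarith [mul_nonneg (hq0 m) (sub_nonneg.mpr h1)]
        · rw [if_neg h, mul_zero]
          exact zero_le
    _ = ENNReal.ofReal (∑ m ∈ Finset.range (R + 1), q m * (((m : ℝ) / n - μ) / δ) ^ 2) := by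
        rw [tsum_eq_sum (s := Finset.range (R + 1))
          (by intro m hm; rw [hqbdd m (by simp at hm; omega), zero_mul, ENNReal.ofReal_zero]),
          ENNReal.ofReal_sum_of_nonneg (fun m _ => mul_nonneg (hq0 m) (by positivity))]
    _ ≤ ENNReal.ofReal ((K : ℝ) ^ 2 / (n * δ ^ 2)) := by
        apply ENNReal.ofReal_le_ofReal
        have h2 : ∑ m ∈ Finset.range (R + 1), q m * (((m : ℝ) / n - μ) / δ) ^ 2
            = (∑ m ∈ Finset.range (R + 1), ((m : ℝ) - n * μ) ^ 2 * q m) / ((n:ℝ) ^ 2 * δ ^ 2) := by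
          rw [Finset.sum_div]
          apply Finset.sum_congr rfl
          intro m _
          field_simp
        rw [h2]
        calc (∑ m ∈ Finset.range (R + 1), ((m : ℝ) - n * μ) ^ 2 * q m) / ((n:ℝ) ^ 2 * δ ^ 2)
            ≤ ((n : ℝ) * (K : ℝ) ^ 2) / ((n:ℝ) ^ 2 * δ ^ 2) := by
              apply div_le_div_of_nonneg_right hcent (by positivity) |>.trans le_rfl
          _ = (K : ℝ) ^ 2 / (n * δ ^ 2) := by
              field_simp

end Cheby
section WLLN
open Classical
variable {f : ℕ → ℝ} {lam : ℝ}

lemma trY_bdd (f : ℕ → ℝ) (K : ℕ) : ∀ j, K < j → trY f K j = 0 := by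
  intro j hj
  rw [trY, if_neg (by omega), if_neg (by omega)]

lemma wlln (hf : IsPmf f) (hmean : Summable (fun i : ℕ => (i : ℝ) * f i))
    (hlam : pmfMean f = lam) (hpos : 0 < lam) (ε δ : ℝ) (hε : 0 < ε) (hδ : 0 < δ) :
    ∃ N : ℕ, 1 ≤ N ∧ ∀ n, N ≤ n →
      ∑' m : ℕ, ENNReal.ofReal (convPow f n m)
          * (if ε ≤ |(m : ℝ) / n - lam| then 1 else 0) ≤ ENNReal.ofReal δ := by
  -- choose truncation level K
  set t : ℕ → ℝ := fun K => ∑' i : ℕ, ((i + K : ℕ) : ℝ) * f (i + K) with ht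
  have htt : Filter.Tendsto t atTop (nhds 0) :=
    tendsto_sum_nat_add (fun i => (i : ℝ) * f i)
  have hb : (0:ℝ) < min (ε / 4) (ε * δ / 8) := by positivity
  obtain ⟨K, hK⟩ := (Metric.tendsto_atTop.mp htt _ hb)
  have hKle : t K ≤ min (ε / 4) (ε * δ / 8) := by
    have := hK K le_rfl
    rw [Real.dist_eq, sub_zero] at this
    exact (le_abs_self _).trans this.le
  have htK1 : t K ≤ ε / 4 := hKle.trans (min_le_left _ _)
  have htK2 : t K ≤ ε * δ / 8 := hKle.trans (min_le_right _ _)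
  -- the truncated pmfs
  set Y := trY f K with hY
  set Z := trZ f K with hZ
  have hY0 : ∀ i, 0 ≤ Y i := trY_nonneg hf.1 K
  have hZ0 : ∀ i, 0 ≤ Z i := trZ_nonneg hf.1 K
  have hYfin : ME Y ≠ ⊤ := ME_trY_fin hf hmean hlam K
  have hZfin : ME Z ≠ ⊤ := ME_trZ_fin hf hmean K
  set μ := (ME Y).toReal with hμdef
  set τ := (ME Z).toReal with hτdef
  have hμOR : ME Y = ENNReal.ofReal μ := (ENNReal.ofReal_toReal hYfin).symm
  have hμ0 : 0 ≤ μ := ENNReal.toReal_nonneg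
  have hτ0 : 0 ≤ τ := ENNReal.toReal_nonneg
  have hμτ : μ + τ = lam := by
    have h := ME_trY_add_trZ hf hmean hlam K
    have := congrArg ENNReal.toReal h
    rwa [ENNReal.toReal_add hYfin hZfin, ENNReal.toReal_ofReal hpos.le] at this
  have htnn : 0 ≤ t K := tsum_nonneg fun i => mul_nonneg (Nat.cast_nonneg _) (hf.1 _)
  have hτle : τ ≤ t K := by
    have h := ME_trZ_le hf hmean K
    calc τ ≤ (ENNReal.ofReal (t K)).toReal := ENNReal.toReal_mono ENNReal.ofReal_ne_top h
      _ = t K := ENNReal.toReal_ofReal htnn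
  -- choose N
  obtain ⟨N₁, hN₁⟩ := exists_nat_gt ((K : ℝ) ^ 2 / ((ε / 4) ^ 2 * (δ / 2)))
  refine ⟨max N₁ 1, le_max_right _ _, ?_⟩
  intro n hn
  have hn1 : 1 ≤ n := le_trans (le_max_right _ _) hn
  have hnn1 : N₁ ≤ n := le_trans (le_max_left _ _) hn
  have hnpos : (0:ℝ) < n := by positivity
  have hcheb_real : (K : ℝ) ^ 2 / (n * (ε / 4) ^ 2) ≤ δ / 2 := by
    rw [div_le_iff₀ (by positivity)]
    have h1 : (K : ℝ) ^ 2 / ((ε / 4) ^ 2 * (δ / 2)) < n :=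
      lt_of_lt_of_le hN₁ (Nat.cast_le.mpr hnn1)
    rw [div_lt_iff₀ (by positivity)] at h1
    nlinarith
  -- identity pushforward
  have hv_id : ∀ j, ENNReal.ofReal (f j)
      = ∑' k : ℕ, (if (fun k : ℕ => k) k = j then ENNReal.ofReal (f k) else 0) := by
    intro j
    rw [tsum_eq_single j (fun k hk => if_neg hk), if_pos rfl]
  -- rewrite through the product space
  rw [← prod_push f hf.1 (fun k => k) f hf.1 hv_id n
    (fun m => if ε ≤ |(m : ℝ) / n - lam| then 1 else 0)]
  have hpoint : ∀ x : Fin n → ℕ,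
      (if ε ≤ |((∑ i, x i : ℕ) : ℝ) / n - lam| then (1:ℝ≥0∞) else 0)
        ≤ (if ε / 4 ≤ |((∑ i, min (x i) K : ℕ) : ℝ) / n - μ| then 1 else 0)
          + (if (n : ℝ) * (ε / 4) ≤ ((∑ i, (x i - K) : ℕ) : ℝ) then 1 else 0) := by
    intro x
    by_cases h1 : ε ≤ |((∑ i, x i : ℕ) : ℝ) / n - lam|
    swap
    · rw [if_neg h1]; exact zero_le
    rw [if_pos h1]
    by_cases h2 : ε / 4 ≤ |((∑ i, min (x i) K : ℕ) : ℝ) / n - μ|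
    · rw [if_pos h2]; exact le_add_right le_rfl
    by_cases h3 : (n : ℝ) * (ε / 4) ≤ ((∑ i, (x i - K) : ℕ) : ℝ)
    · rw [if_pos h3]; exact le_add_left le_rfl
    exfalso
    push_neg at h2 h3
    have habc : (∑ i, min (x i) K) + (∑ i, (x i - K)) = ∑ i, x i := by
      rw [← Finset.sum_add_distrib]
      exact Finset.sum_congr rfl fun i _ => by omega
    have hcast : ((∑ i, x i : ℕ) : ℝ)
        = ((∑ i, min (x i) K : ℕ) : ℝ) + ((∑ i, (x i - K) : ℕ) : ℝ) := by
      rw [← Nat.cast_add, habc]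
    set b := ((∑ i, min (x i) K : ℕ) : ℝ)
    set c := ((∑ i, (x i - K) : ℕ) : ℝ)
    have hc0 : 0 ≤ c := Nat.cast_nonneg _
    have hcn : c / n < ε / 4 := by
      rw [div_lt_iff₀ hnpos]
      linarith [h3]
    have hb2 := abs_lt.mp h2
    have hτ4 : τ ≤ ε / 4 := hτle.trans htK1
    have hkey : ((∑ i, x i : ℕ) : ℝ) / n - lam = (b / n - μ) + (c / n - τ) := by
      rw [hcast, ← hμτ]
      field_simp
      ring
    rcases le_abs'.mp h1 with h | h
    · rw [hkey] at h
      have : 0 ≤ c / n := by positivity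
      linarith [hb2.1]
    · rw [hkey] at h
      linarith [hb2.2, hτ0]
  calc ∑' x : Fin n → ℕ, (∏ i, ENNReal.ofReal (f (x i)))
        * (if ε ≤ |((∑ i, x i : ℕ) : ℝ) / n - lam| then 1 else 0)
      ≤ ∑' x : Fin n → ℕ, ((∏ i, ENNReal.ofReal (f (x i)))
          * (if ε / 4 ≤ |((∑ i, min (x i) K : ℕ) : ℝ) / n - μ| then 1 else 0)
        + (∏ i, ENNReal.ofReal (f (x i)))
          * (if (n : ℝ) * (ε / 4) ≤ ((∑ i, (x i - K) : ℕ) : ℝ) then 1 else 0)) := by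
        apply ENNReal.tsum_le_tsum
        intro x
        rw [← mul_add]
        exact mul_le_mul_right (hpoint x) _
    _ = (∑' m : ℕ, ENNReal.ofReal (convPow Y n m)
          * (if ε / 4 ≤ |(m : ℝ) / n - μ| then 1 else 0))
        + ∑' m : ℕ, ENNReal.ofReal (convPow Z n m)
          * (if (n : ℝ) * (ε / 4) ≤ (m : ℝ) then 1 else 0) := by
        rw [ENNReal.tsum_add]
        congr 1
        · exact prod_push f hf.1 (fun k => min k K) Y hY0 (trY_push hf K) n
            (fun m => if ε / 4 ≤ |(m : ℝ) / n - μ| then 1 else 0)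
        · exact prod_push f hf.1 (fun k => k - K) Z hZ0 (trZ_push hf K) n
            (fun m => if (n : ℝ) * (ε / 4) ≤ (m : ℝ) then 1 else 0)
    _ ≤ ENNReal.ofReal (δ / 2) + ENNReal.ofReal (δ / 2) := by
        apply add_le_add
        · calc _ ≤ ENNReal.ofReal ((K : ℝ) ^ 2 / (n * (ε / 4) ^ 2)) :=
              chebyshev_bound hY0 (SE_trY hf K) (trY_bdd f K) hμOR hμ0 n hn1 (ε/4) (by positivity)
            _ ≤ ENNReal.ofReal (δ / 2) := ENNReal.ofReal_le_ofReal hcheb_real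
        · calc ∑' m : ℕ, ENNReal.ofReal (convPow Z n m)
                * (if (n : ℝ) * (ε / 4) ≤ (m : ℝ) then 1 else 0)
              ≤ ME (convPow Z n) / ENNReal.ofReal ((n : ℝ) * (ε / 4)) :=
                markov_bound (convPow Z n) _ (by positivity)
            _ = ((n : ℝ≥0∞) * ME Z) / ((n : ℝ≥0∞) * ENNReal.ofReal (ε / 4)) := by
                rw [ME_convPow hZ0 (SE_trZ hf K) n,
                  ENNReal.ofReal_mul (Nat.cast_nonneg n), ENNReal.ofReal_natCast]
            _ = ME Z / ENNReal.ofReal (ε / 4) :=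
                ENNReal.mul_div_mul_left _ _ (by simp; omega) (ENNReal.natCast_ne_top n)
            _ ≤ ENNReal.ofReal (t K) / ENNReal.ofReal (ε / 4) :=
                ENNReal.div_le_div_right (ME_trZ_le hf hmean K) _
            _ = ENNReal.ofReal (t K / (ε / 4)) := (ENNReal.ofReal_div_of_pos (by positivity)).symm
            _ ≤ ENNReal.ofReal (δ / 2) := by
                apply ENNReal.ofReal_le_ofReal
                rw [div_le_iff₀ (by positivity)]
                nlinarith
    _ = ENNReal.ofReal δ := by
        rw [← ENNReal.ofReal_add (by positivity) (by positivity)]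
        norm_num

end WLLN
section Final
open Classical
variable {f : ℕ → ℝ} {lam : ℝ}

lemma LE_bound (hf : IsPmf f) (hmean : Summable (fun i : ℕ => (i : ℝ) * f i))
    (hlam : pmfMean f = lam) (hpos : 0 < lam) {k₀ : ℕ} (hk₀ : 1 ≤ k₀)
    (hfin : LEseq f lam k₀ ≠ ⊤) (c : ℝ) (hc : 0 < c) :
    ∃ N : ℕ, max k₀ 1 ≤ N ∧ ∀ n, N ≤ n → LEseq f lam n ≤ ENNReal.ofReal c := by
  -- (i) continuity of Phi at lam
  have hcont : ContinuousAt (Phi lam) lam := by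
    have h1 : ContinuousAt (fun x : ℝ => x / lam) lam := continuousAt_id.div_const lam
    have h2 : ContinuousAt Real.log (lam / lam) :=
      Real.continuousAt_log (by rw [div_self hpos.ne']; norm_num)
    have h3 : ContinuousAt (fun x : ℝ => Real.log (x / lam)) lam :=
      ContinuousAt.comp (f := fun x : ℝ => x / lam) h2 h1
    exact ((continuousAt_id.mul h3).sub continuousAt_id).add continuousAt_const
  have hPhilam : Phi lam lam = 0 := by
    unfold Phi; rw [div_self hpos.ne', Real.log_one]; ring
  obtain ⟨ρ, hρ0, hρ⟩ := Metric.continuousAt_iff.mp hcont (c / 4) (by positivity)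
  have hnear : ∀ x : ℝ, |x - lam| < ρ → Phi lam x ≤ c / 4 := by
    intro x hx
    have := hρ (x := x) (by rwa [Real.dist_eq])
    rw [Real.dist_eq, hPhilam, sub_zero] at this
    exact (le_abs_self _).trans this.le
  -- (ii) tail control at k₀
  set a : ℕ → ℝ≥0∞ := fun k => ENNReal.ofReal (convPow f k₀ k * Phi lam ((k : ℝ) / (k₀ : ℕ)))
    with ha
  have htail := ENNReal.tendsto_sum_nat_add a hfin
  have hc8 : (0:ℝ≥0∞) < ENNReal.ofReal (c / 8) := ENNReal.ofReal_pos.mpr (by positivity)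
  obtain ⟨T, hT⟩ := (ENNReal.tendsto_nhds_zero.mp htail _ hc8).exists
  -- (iii) the convex function ψ
  set M : ℝ := 1 + ∑ k ∈ Finset.range T, Phi lam ((k : ℝ) / (k₀ : ℕ)) with hM
  have hPhinn : ∀ k : ℕ, 0 ≤ Phi lam ((k : ℝ) / (k₀ : ℕ)) :=
    fun k => Phi_nonneg hpos (by positivity)
  have hM1 : 1 ≤ M := le_add_of_nonneg_right (Finset.sum_nonneg fun k _ => hPhinn k)
  have hMb : ∀ k, k < T → Phi lam ((k : ℝ) / (k₀ : ℕ)) ≤ M := by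
    intro k hk
    have := Finset.single_le_sum (f := fun k : ℕ => Phi lam ((k : ℝ) / (k₀ : ℕ)))
      (fun i _ => hPhinn i) (Finset.mem_range.mpr hk)
    linarith
  set ψ : ℝ → ℝ := fun x => max (Phi lam x - M) 0 with hψ
  have hψc : ConvexOn ℝ (Set.Ici 0) ψ := by
    have h := ((Phi_convexOn hpos).add (convexOn_const (-M) (convex_Ici 0))).sup
      (convexOn_const (0:ℝ) (convex_Ici 0))
    refine h.congr fun x hx => ?_
    simp only [Pi.sup_apply, Pi.add_apply, hψ]
    rw [sub_eq_add_neg]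
  have hψ0 : ∀ x : ℝ, 0 ≤ x → 0 ≤ ψ x := fun x _ => le_max_right _ _
  have hψle : ∀ x : ℝ, 0 ≤ x → ψ x ≤ Phi lam x := by
    intro x hx
    apply max_le _ (Phi_nonneg hpos hx)
    linarith [hM1]
  have hψT : ∀ k, k < T → ψ ((k : ℝ) / (k₀ : ℕ)) = 0 :=
    fun k hk => max_eq_right (sub_nonpos.mpr (hMb k hk))
  -- E_ψ(k₀) is small
  have hEψk₀ : ∑' k : ℕ, ENNReal.ofReal (convPow f k₀ k * ψ ((k : ℝ) / (k₀ : ℕ)))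
      ≤ ENNReal.ofReal (c / 8) := by
    set b : ℕ → ℝ≥0∞ := fun k => ENNReal.ofReal (convPow f k₀ k * ψ ((k : ℝ) / (k₀ : ℕ)))
      with hb
    have hb0 : ∀ k, k < T → b k = 0 := by
      intro k hk
      rw [hb]
      simp only
      rw [hψT k hk, mul_zero, ENNReal.ofReal_zero]
    have hinj : Function.Injective (fun i : ℕ => i + T) := fun x y h => by simpa using h
    have hsupp : Function.support b ⊆ Set.range (fun i : ℕ => i + T) := by
      intro k hk
      rcases Nat.lt_or_ge k T with h | h
      · exact absurd (hb0 k h) hk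
      · exact ⟨k - T, by show k - T + T = k; omega⟩
    calc ∑' k, b k = ∑' k : ℕ, b (k + T) := (hinj.tsum_eq hsupp).symm
      _ ≤ ∑' k : ℕ, a (k + T) := by
          apply ENNReal.tsum_le_tsum
          intro k
          apply ENNReal.ofReal_le_ofReal
          exact mul_le_mul_of_nonneg_left (hψle _ (by positivity))
            (convPow_nonneg hf.1 k₀ _)
      _ ≤ ENNReal.ofReal (c / 8) := hT
  -- (iv) the threshold G
  set G : ℝ := max (lam * Real.exp 3) M with hG
  have hGpos : 0 < G := lt_of_lt_of_le (by positivity) (le_max_left _ _)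
  have hG2 : ∀ x : ℝ, G ≤ x → Phi lam x ≤ 2 * ψ x := by
    intro x hx
    have hxe : lam * Real.exp 3 ≤ x := le_trans (le_max_left _ _) hx
    have hxM : M ≤ x := le_trans (le_max_right _ _) hx
    have hx0 : 0 < x := lt_of_lt_of_le (by positivity) hxe
    have hlog : 3 ≤ Real.log (x / lam) := by
      rw [Real.le_log_iff_exp_le (div_pos hx0 hpos)]
      rw [le_div_iff₀ hpos]
      linarith [hxe]
    have hPhi2x : 2 * x ≤ Phi lam x := by
      unfold Phi
      nlinarith [mul_le_mul_of_nonneg_left hlog hx0.le]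
    have hmax : Phi lam x - M ≤ ψ x := le_max_left _ _
    linarith
  -- (v) the bound C on [0, G]
  set C : ℝ := G * max 0 (Real.log (G / lam)) + lam with hC
  have hC0 : 0 < C := by
    have h0 : 0 ≤ G * max 0 (Real.log (G / lam)) := mul_nonneg hGpos.le (le_max_left _ _)
    rw [hC]
    linarith
  have hCb : ∀ x : ℝ, 0 ≤ x → x ≤ G → Phi lam x ≤ C := by
    intro x hx0 hxG
    have hxl : x * Real.log (x / lam) ≤ G * max 0 (Real.log (G / lam)) := by
      rcases eq_or_lt_of_le hx0 with h | h
      · rw [← h]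
        simp only [zero_mul]
        exact mul_nonneg hGpos.le (le_max_left _ _)
      · rcases le_or_gt (Real.log (x / lam)) 0 with hl | hl
        · calc x * Real.log (x / lam) ≤ 0 := mul_nonpos_of_nonneg_of_nonpos hx0 hl
            _ ≤ _ := mul_nonneg hGpos.le (le_max_left _ _)
        · have hll : Real.log (x / lam) ≤ Real.log (G / lam) :=
            Real.log_le_log (by positivity) ((div_le_div_iff_of_pos_right hpos).mpr hxG)
          calc x * Real.log (x / lam) ≤ G * Real.log (x / lam) :=
              mul_le_mul_of_nonneg_right hxG hl.le
            _ ≤ G * max 0 (Real.log (G / lam)) :=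
              mul_le_mul_of_nonneg_left (le_trans hll (le_max_right _ _)) hGpos.le
    unfold Phi
    rw [hC]
    nlinarith
  -- (vi) WLLN
  obtain ⟨N₁, hN₁1, hN₁⟩ := wlln hf hmean hlam hpos ρ ((c / 4) / C) hρ0 (by positivity)
  refine ⟨max (max k₀ 1) N₁, le_max_left _ _, ?_⟩
  intro n hn
  have hk₀n : k₀ ≤ n := le_trans (le_trans (le_max_left _ _) (le_max_left _ _)) hn
  have hn1 : 1 ≤ n := le_trans hk₀ hk₀n
  have hnN₁ : N₁ ≤ n := le_trans (le_max_right _ _) hn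
  set p : ℕ → ℝ := convPow f n with hp
  have hp0 : ∀ k, 0 ≤ p k := convPow_nonneg hf.1 n
  -- termwise bound
  have hterm : ∀ k : ℕ,
      ENNReal.ofReal (p k * Phi lam ((k : ℝ) / (n : ℕ)))
        ≤ ENNReal.ofReal (p k * (c / 4))
          + (ENNReal.ofReal C * (ENNReal.ofReal (p k)
              * (if ρ ≤ |(k : ℝ) / n - lam| then 1 else 0))
          + 2 * ENNReal.ofReal (p k * ψ ((k : ℝ) / (n : ℕ)))) := by
    intro k
    set x : ℝ := (k : ℝ) / (n : ℕ) with hx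
    have hx0 : 0 ≤ x := by positivity
    rcases lt_or_ge (|x - lam|) ρ with h1 | h1
    · calc ENNReal.ofReal (p k * Phi lam x) ≤ ENNReal.ofReal (p k * (c / 4)) :=
            ENNReal.ofReal_le_ofReal (mul_le_mul_of_nonneg_left (hnear x h1) (hp0 k))
        _ ≤ _ := le_self_add
    · rcases le_or_gt x G with h2 | h2
      · have : ENNReal.ofReal (p k * Phi lam x)
            ≤ ENNReal.ofReal C * (ENNReal.ofReal (p k) * (if ρ ≤ |(k : ℝ) / n - lam| then 1 else 0)) := by
          rw [if_pos (by rwa [← hx]), mul_one, ← ENNReal.ofReal_mul (le_of_lt hC0)]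
          apply ENNReal.ofReal_le_ofReal
          rw [mul_comm C]
          exact mul_le_mul_of_nonneg_left (hCb x hx0 h2) (hp0 k)
        exact this.trans (le_self_add.trans le_add_self)
      · have : ENNReal.ofReal (p k * Phi lam x) ≤ 2 * ENNReal.ofReal (p k * ψ x) := by
          rw [show (2:ℝ≥0∞) = ENNReal.ofReal 2 by norm_num, ← ENNReal.ofReal_mul (by norm_num)]
          apply ENNReal.ofReal_le_ofReal
          calc p k * Phi lam x ≤ p k * (2 * ψ x) :=
              mul_le_mul_of_nonneg_left (hG2 x h2.le) (hp0 k)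
            _ = 2 * (p k * ψ x) := by ring
        exact this.trans (le_add_self.trans le_add_self)
  -- assemble
  calc LEseq f lam n
      ≤ ∑' k : ℕ, (ENNReal.ofReal (p k * (c / 4))
          + (ENNReal.ofReal C * (ENNReal.ofReal (p k)
              * (if ρ ≤ |(k : ℝ) / n - lam| then 1 else 0))
          + 2 * ENNReal.ofReal (p k * ψ ((k : ℝ) / (n : ℕ))))) :=
        ENNReal.tsum_le_tsum hterm
    _ = (∑' k : ℕ, ENNReal.ofReal (p k * (c / 4)))
        + ((∑' k : ℕ, ENNReal.ofReal C * (ENNReal.ofReal (p k)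
              * (if ρ ≤ |(k : ℝ) / n - lam| then 1 else 0)))
        + ∑' k : ℕ, 2 * ENNReal.ofReal (p k * ψ ((k : ℝ) / (n : ℕ)))) := by
        rw [ENNReal.tsum_add]
        congr 1
        rw [ENNReal.tsum_add]
    _ ≤ ENNReal.ofReal (c / 4) + (ENNReal.ofReal (c / 4) + ENNReal.ofReal (c / 4)) := by
        apply add_le_add
        · have : ∀ k : ℕ, ENNReal.ofReal (p k * (c / 4))
              = ENNReal.ofReal (c / 4) * ENNReal.ofReal (p k) := by
            intro k
            rw [← ENNReal.ofReal_mul (by positivity)]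
            congr 1
            ring
          rw [tsum_congr this, ENNReal.tsum_mul_left]
          rw [show (∑' k, ENNReal.ofReal (p k)) = SE p from rfl, SE_convPow hf.1 (SE_f_one hf) n,
            mul_one]
        apply add_le_add
        · rw [ENNReal.tsum_mul_left]
          calc ENNReal.ofReal C * ∑' k : ℕ, ENNReal.ofReal (p k)
                * (if ρ ≤ |(k : ℝ) / n - lam| then 1 else 0)
              ≤ ENNReal.ofReal C * ENNReal.ofReal ((c / 4) / C) :=
                mul_le_mul_right (hN₁ n hnN₁) _
            _ = ENNReal.ofReal (c / 4) := by
                rw [← ENNReal.ofReal_mul (le_of_lt hC0), mul_div_cancel₀ _ (ne_of_gt hC0)]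
        · rw [ENNReal.tsum_mul_left]
          calc 2 * ∑' k : ℕ, ENNReal.ofReal (p k * ψ ((k : ℝ) / (n : ℕ)))
              ≤ 2 * ∑' k : ℕ, ENNReal.ofReal (convPow f k₀ k * ψ ((k : ℝ) / (k₀ : ℕ))) :=
                mul_le_mul_right (E_mono_le hf.1 (SE_f_one hf) hψc hψ0 hk₀ hk₀n) _
            _ ≤ 2 * ENNReal.ofReal (c / 8) := mul_le_mul_right hEψk₀ _
            _ = ENNReal.ofReal (c / 4) := by
                rw [show (2:ℝ≥0∞) = ENNReal.ofReal 2 by norm_num,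
                  ← ENNReal.ofReal_mul (by norm_num)]
                congr 1
                ring
    _ ≤ ENNReal.ofReal c := by
        rw [← ENNReal.ofReal_add (by positivity) (by positivity),
          ← ENNReal.ofReal_add (by positivity) (by positivity)]
        apply ENNReal.ofReal_le_ofReal
        linarith

end Final
end LLN

/-- For i.i.d. `X_i` with pmf `f` of mean `λ ∈ (0,∞)` and `l_n = E[X̄_n log(X̄_n/λ)]`:
`l_n ≥ 0`, `l_n ≤ l_{n-1}` for `n ≥ 2`, and if `l_k < ∞` for some `k ≥ 1` then `l_n → 0`. -/
theorem lSeq_nonneg_antitone_tendsto_zero (f : ℕ → ℝ) (lam : ℝ) (hf : IsPmf f)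
    (hmean : Summable (fun i : ℕ => (i : ℝ) * f i)) (hlam : pmfMean f = lam)
    (hpos : 0 < lam) :
    (∀ n : ℕ, 1 ≤ n → Summable (lTerm f lam n) → 0 ≤ ∑' k : ℕ, lTerm f lam n k) ∧
    (∀ n : ℕ, 2 ≤ n → lSeq f lam n ≤ lSeq f lam (n - 1)) ∧
    ((∃ k : ℕ, 1 ≤ k ∧ lSeq f lam k ≠ ⊤) →
      Tendsto (fun n : ℕ => lSeq f lam n) atTop (nhds 0)) := by
  refine ⟨fun n hn hS => LLN.part1 hf hmean hlam hpos n hn hS,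
    fun n hn => LLN.part2 hf hmean hlam hpos n hn, ?_⟩
  rintro ⟨k₀, hk₀, hfin⟩
  rw [LLN.lSeq_eq_LEseq hf hmean hlam hpos k₀ hk₀] at hfin
  rw [ENNReal.tendsto_nhds_zero]
  intro ε hε
  obtain ⟨c, hc0, hcle⟩ : ∃ c : ℝ, 0 < c ∧ ENNReal.ofReal c ≤ ε := by
    rcases eq_or_ne ε ⊤ with h | h
    · exact ⟨1, one_pos, by rw [h]; exact le_top⟩
    · exact ⟨ε.toReal, ENNReal.toReal_pos (ne_of_gt hε) h,
        by rw [ENNReal.ofReal_toReal h]⟩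
  obtain ⟨N, hNge, hN⟩ := LLN.LE_bound hf hmean hlam hpos hk₀ hfin c hc0
  rw [Filter.eventually_atTop]
  refine ⟨N, fun n hn => ?_⟩
  rw [LLN.lSeq_eq_LEseq hf hmean hlam hpos n
    (le_trans (le_trans (le_max_right _ _) hNge) hn)]
  exact (hN n hn).trans hcle
end

section
/- Let f be a pmf on Z_+ with mean λ ∈ (0,∞) and finite support (f_i = 0 for all i ≥ k, for some k). Then for all α ∈ (0,1), the derivative of D(T_α(f)) with respect to α equals λ · D(T_α(S(f)) | T_α(f)). -/
open scoped BigOperators ENNReal Classical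
open Filter

/-- Real-valued relative entropy `∑ᵢ fᵢ log(fᵢ/gᵢ)` (all sums here are finite for pmfs
with finite support). -/
noncomputable def KLr (f g : ℕ → ℝ) : ℝ := ∑' i : ℕ, f i * Real.log (f i / g i)

lemma choose_id1 (j s : ℕ) : (s + 1) * Nat.choose j (s + 1) = j * Nat.choose (j - 1) s := by
  cases j with
  | zero => simp
  | succ n =>
    rw [Nat.succ_sub_one]
    have h := Nat.add_one_mul_choose_eq n s
    rw [h]; ring

lemma choose_id2 (j s : ℕ) : (j - s) * Nat.choose j s = j * Nat.choose (j - 1) s := by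
  cases j with
  | zero => simp
  | succ n =>
    rw [Nat.succ_sub_one]
    have h := Nat.choose_mul_succ_eq n s
    rw [mul_comm (n+1) (Nat.choose n s), h]; ring

/-- auxiliary: the polynomial form of the thinning. -/

noncomputable def Fs (f : ℕ → ℝ) (N : ℕ) (a : ℝ) (i : ℕ) : ℝ :=
  ∑ j ∈ Finset.range (N+1), f j * (Nat.choose j i : ℝ) * a ^ i * (1-a) ^ (j - i)

/-- auxiliary: `lam` times the thinning of the size-biased pmf. -/

noncomputable def Gs (f : ℕ → ℝ) (N : ℕ) (a : ℝ) (i : ℕ) : ℝ :=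
  ∑ j ∈ Finset.range (N+1), (j : ℝ) * f j * (Nat.choose (j-1) i : ℝ) * a ^ i * (1-a) ^ (j - 1 - i)

/-- auxiliary: derivative of `Fs` in `a`. -/

noncomputable def Ds (f : ℕ → ℝ) (N : ℕ) (a : ℝ) (i : ℕ) : ℝ :=
  ∑ j ∈ Finset.range (N+1), f j * (Nat.choose j i : ℝ) *
    ((i : ℝ) * a ^ (i-1) * (1-a) ^ (j - i) + a ^ i * -(((j - i : ℕ) : ℝ) * (1-a) ^ (j - i - 1)))

lemma thin_eq_sum (f : ℕ → ℝ) (m : ℕ) (h : ∀ j, m ≤ j → f j = 0) (a : ℝ) (i : ℕ) :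
    thin a f i = ∑ j ∈ Finset.range m, f j * (Nat.choose j i : ℝ) * a ^ i * (1 - a) ^ (j - i) := by
  refine tsum_eq_sum (fun j hj => ?_)
  rw [h j (by simpa using hj)]; ring

lemma thin_eq_zero (f : ℕ → ℝ) (m : ℕ) (h : ∀ j, m ≤ j → f j = 0) (a : ℝ) (i : ℕ)
    (him : m ≤ i) : thin a f i = 0 := by
  rw [thin_eq_sum f m h a i]
  refine Finset.sum_eq_zero (fun j hj => ?_)
  rw [Nat.choose_eq_zero_of_lt (lt_of_lt_of_le (Finset.mem_range.mp hj) him)]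
  simp

lemma binom_one (a : ℝ) (m n : ℕ) (h : m < n) :
    ∑ i ∈ Finset.range n, a ^ i * (1-a) ^ (m - i) * (Nat.choose m i : ℝ) = 1 := by
  have hsub : Finset.range (m+1) ⊆ Finset.range n := Finset.range_subset_range.mpr h
  rw [← Finset.sum_subset hsub (fun i _ hi => by
    rw [Nat.choose_eq_zero_of_lt (by simpa using hi)]; simp)]
  have hb := add_pow a (1-a) m
  simp only [add_sub_cancel, one_pow] at hb
  exact hb.symm

lemma hasDerivAt_Fs (f : ℕ → ℝ) (N : ℕ) (α : ℝ) (i : ℕ) :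
    HasDerivAt (fun a => Fs f N a i) (Ds f N α i) α := by
  refine HasDerivAt.fun_sum (fun j _ => ?_)
  have hb1 : HasDerivAt (fun a : ℝ => a ^ i) ((i : ℝ) * α ^ (i-1)) α := hasDerivAt_pow i α
  have hin : HasDerivAt (fun a : ℝ => 1 - a) (-1) α := by
    simpa using (hasDerivAt_id α).const_sub 1
  have hb2 : HasDerivAt (fun a : ℝ => (1-a) ^ (j - i)) (-(((j - i : ℕ) : ℝ) * (1-α) ^ (j - i - 1))) α := by
    have h := (hasDerivAt_pow (j - i) (1-α)).comp α hin
    simpa [Function.comp_def, mul_comm, mul_assoc, mul_left_comm] using h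
  have h := (hb1.mul hb2).const_mul (f j * (Nat.choose j i : ℝ))
  have hfun : (fun a : ℝ => f j * (Nat.choose j i : ℝ) * a ^ i * (1-a) ^ (j - i))
      = (fun a : ℝ => f j * (Nat.choose j i : ℝ) * (a ^ i * (1-a) ^ (j - i))) := by
    funext a; ring
  rw [hfun]
  exact h

lemma Fs_succ_eq (f : ℕ → ℝ) (N : ℕ) (α : ℝ) (i : ℕ) :
    ((i : ℝ) + 1) * Fs f N α (i+1) = α * Gs f N α i := by
  rw [Fs, Gs, Finset.mul_sum, Finset.mul_sum]
  refine Finset.sum_congr rfl (fun j _ => ?_)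
  have h1 : (((i+1) * Nat.choose j (i+1) : ℕ) : ℝ) = ((j * Nat.choose (j-1) i : ℕ) : ℝ) := by
    rw [choose_id1]
  push_cast at h1
  have h2 : j - (i+1) = j - 1 - i := by omega
  rw [h2]
  linear_combination (f j * α^(i+1) * (1-α)^(j-1-i)) * h1

lemma Ds_zero_eq (f : ℕ → ℝ) (N : ℕ) (α : ℝ) :
    Ds f N α 0 = -(Gs f N α 0) := by
  rw [Ds, Gs, ← Finset.sum_neg_distrib]
  refine Finset.sum_congr rfl (fun j _ => ?_)
  simp only [Nat.choose_zero_right, Nat.cast_zero, Nat.cast_one, Nat.sub_zero, pow_zero]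
  ring

lemma Ds_succ_eq (f : ℕ → ℝ) (N : ℕ) (α : ℝ) (i : ℕ) :
    Ds f N α (i+1) = Gs f N α i - Gs f N α (i+1) := by
  rw [Ds, Gs, Gs, ← Finset.sum_sub_distrib]
  refine Finset.sum_congr rfl (fun j _ => ?_)
  have h1 : (((i+1) * Nat.choose j (i+1) : ℕ) : ℝ) = ((j * Nat.choose (j-1) i : ℕ) : ℝ) := by
    rw [choose_id1]
  have h2 : (((j - (i+1)) * Nat.choose j (i+1) : ℕ) : ℝ) = ((j * Nat.choose (j-1) (i+1) : ℕ) : ℝ) := by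
    rw [choose_id2]
  push_cast at h1 h2
  have e1 : j - (i+1) = j - 1 - i := by omega
  have e2 : j - (i+1) - 1 = j - 1 - (i+1) := by omega
  have e3 : (i+1) - 1 = i := by omega
  rw [e1] at h2 ⊢
  have e2' : j - 1 - i - 1 = j - 1 - (i+1) := by omega
  rw [e2', e3]
  push_cast
  linear_combination (f j * α^i * (1-α)^(j-1-i)) * h1 - (f j * α^(i+1) * (1-α)^(j-1-(i+1))) * h2

lemma Gs_N (f : ℕ → ℝ) (N : ℕ) (α : ℝ) : Gs f N α N = 0 := by
  rw [Gs]
  refine Finset.sum_eq_zero (fun j hj => ?_)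
  cases j with
  | zero => simp
  | succ m =>
    have : m < N := by have := Finset.mem_range.mp hj; omega
    rw [Nat.succ_sub_one, Nat.choose_eq_zero_of_lt this]
    simp

lemma sum_Ds (f : ℕ → ℝ) (N : ℕ) (α : ℝ) :
    ∑ i ∈ Finset.range (N+1), Ds f N α i = 0 := by
  rw [Finset.sum_range_succ']
  have h1 : ∀ i, Ds f N α (i+1) = Gs f N α i - Gs f N α (i+1) := Ds_succ_eq f N α
  rw [Finset.sum_congr rfl (fun i _ => h1 i), Finset.sum_range_sub' (fun i => Gs f N α i) N,
    Ds_zero_eq, Gs_N]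
  ring

lemma sum_Fs (f : ℕ → ℝ) (N : ℕ) (a : ℝ) :
    ∑ i ∈ Finset.range (N+1), Fs f N a i = ∑ j ∈ Finset.range (N+1), f j := by
  simp only [Fs]
  rw [Finset.sum_comm]
  refine Finset.sum_congr rfl (fun j hj => ?_)
  have hj' : j < N+1 := Finset.mem_range.mp hj
  calc ∑ i ∈ Finset.range (N+1), f j * (Nat.choose j i : ℝ) * a ^ i * (1-a) ^ (j - i)
      = f j * ∑ i ∈ Finset.range (N+1), a ^ i * (1-a) ^ (j - i) * (Nat.choose j i : ℝ) := by
        rw [Finset.mul_sum]; exact Finset.sum_congr rfl (fun i _ => by ring)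
    _ = f j := by rw [binom_one a j (N+1) hj']; ring

lemma sum_Gs (f : ℕ → ℝ) (N : ℕ) (a : ℝ) :
    ∑ i ∈ Finset.range N, Gs f N a i = ∑ j ∈ Finset.range (N+1), (j : ℝ) * f j := by
  simp only [Gs]
  rw [Finset.sum_comm]
  refine Finset.sum_congr rfl (fun j hj => ?_)
  cases j with
  | zero => simp
  | succ m =>
    have hm : m < N := by have := Finset.mem_range.mp hj; omega
    rw [Nat.succ_sub_one]
    calc ∑ i ∈ Finset.range N, ((m+1 : ℕ) : ℝ) * f (m+1) * (Nat.choose m i : ℝ) * a ^ i * (1-a) ^ (m - i)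
        = ((m+1 : ℕ) : ℝ) * f (m+1) * ∑ i ∈ Finset.range N, a ^ i * (1-a) ^ (m - i) * (Nat.choose m i : ℝ) := by
          rw [Finset.mul_sum]; exact Finset.sum_congr rfl (fun i _ => by ring)
      _ = ((m+1 : ℕ) : ℝ) * f (m+1) := by rw [binom_one a m N hm]; ring

lemma sum_i_Fs (f : ℕ → ℝ) (N : ℕ) (a : ℝ) :
    ∑ i ∈ Finset.range (N+1), (i : ℝ) * Fs f N a i
      = a * ∑ i ∈ Finset.range N, Gs f N a i := by
  rw [Finset.sum_range_succ', Finset.mul_sum]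
  simp only [Nat.cast_zero, zero_mul, add_zero]
  refine Finset.sum_congr rfl (fun i _ => ?_)
  have h := Fs_succ_eq f N a i
  push_cast
  rw [h]

lemma Fs_pos (f : ℕ → ℝ) (N : ℕ) (hfnn : ∀ j, 0 ≤ f j) (hfN : 0 < f N) (a : ℝ)
    (ha0 : 0 < a) (ha1 : a < 1) (i : ℕ) (hi : i ≤ N) : 0 < Fs f N a i := by
  have h1a : (0:ℝ) < 1 - a := by linarith
  refine Finset.sum_pos' (fun j _ => ?_) ⟨N, Finset.self_mem_range_succ N, ?_⟩
  · have := hfnn j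
    positivity
  · have hc : 0 < (Nat.choose N i : ℝ) := by
      exact_mod_cast Nat.choose_pos hi
    positivity

lemma Gs_nonneg (f : ℕ → ℝ) (N : ℕ) (hfnn : ∀ j, 0 ≤ f j) (a : ℝ)
    (ha0 : 0 ≤ a) (ha1 : a ≤ 1) (i : ℕ) : 0 ≤ Gs f N a i := by
  refine Finset.sum_nonneg (fun j _ => ?_)
  have := hfnn j
  have h1a : (0:ℝ) ≤ 1 - a := by linarith
  positivity

lemma po_pos_s10 {c : ℝ} (hc : 0 < c) (i : ℕ) : 0 < po c i := by
  unfold po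
  positivity

lemma po_log {c : ℝ} (hc : 0 < c) (i : ℕ) :
    Real.log (po c i) = (i : ℝ) * Real.log c - c - Real.log (Nat.factorial i) := by
  unfold po
  rw [Real.log_div (by positivity) (by positivity), Real.log_mul (by positivity) (Real.exp_ne_zero _),
    Real.log_pow, Real.log_exp]
  ring

lemma po_succ (c : ℝ) (i : ℕ) : po c (i+1) = po c i * c / ((i : ℝ) + 1) := by
  unfold po
  rw [Nat.factorial_succ, pow_succ]
  push_cast
  have h1 : ((Nat.factorial i : ℝ)) ≠ 0 := by positivity
  field_simp

/-- For a finitely supported pmf `f` with mean `λ ∈ (0,∞)` and `α ∈ (0,1)`,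
`(d/dα) D(T_α(f)) = λ · D(T_α(S(f)) | T_α(f))`, where `D(T_α(f)) = D(T_α(f) | po(αλ))`. -/
theorem hasDerivAt_relEntropy_thin (f : ℕ → ℝ) (lam : ℝ) (hf : IsPmf f)
    (hlam : pmfMean f = lam) (hpos : 0 < lam)
    (k : ℕ) (hsupp : ∀ i : ℕ, k ≤ i → f i = 0)
    (α : ℝ) (hα : α ∈ Set.Ioo (0 : ℝ) 1) :
    HasDerivAt (fun a : ℝ => KLr (thin a f) (po (a * lam)))
      (lam * KLr (thin α (sizeBias f)) (thin α f)) α := by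
  classical
  obtain ⟨hfnn, hfsum⟩ := hf
  obtain ⟨hα0, hα1⟩ := hα
  have hlam0 : lam ≠ 0 := ne_of_gt hpos
  have hα0' : α ≠ 0 := ne_of_gt hα0
  -- the top of the support
  have hex : ∃ j, f j ≠ 0 := by
    by_contra h
    push_neg at h
    have h0 : HasSum f 0 := by
      have : f = fun _ => (0:ℝ) := funext h
      rw [this]
      exact hasSum_zero
    exact one_ne_zero (hfsum.unique h0)
  have hNex : ∃ N, f N ≠ 0 ∧ ∀ j, N + 1 ≤ j → f j = 0 := by
    obtain ⟨j, hj⟩ := hex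
    have hjk : j ≤ k := by
      by_contra hc
      exact hj (hsupp j (by omega))
    refine ⟨Nat.findGreatest (fun j => f j ≠ 0) k, Nat.findGreatest_spec (P := fun j => f j ≠ 0) hjk hj, ?_⟩
    intro m hm
    by_contra hc
    rcases le_or_gt m k with h1 | h1
    · exact Nat.findGreatest_is_greatest (P := fun j => f j ≠ 0) (by omega) h1 hc
    · exact hc (hsupp m h1.le)
  obtain ⟨N, hfN, hbig⟩ := hNex
  have hfNpos : 0 < f N := (hfnn N).lt_of_ne (Ne.symm hfN)
  -- pmf data as finite sums
  have hsum1 : ∑ j ∈ Finset.range (N+1), f j = 1 := by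
    rw [← tsum_eq_sum (L := SummationFilter.unconditional ℕ) (fun j hj => hbig j (by simpa using hj))]
    exact hfsum.tsum_eq
  have hmean : ∑ j ∈ Finset.range (N+1), (j:ℝ) * f j = lam := by
    rw [← hlam, pmfMean, tsum_eq_sum (s := Finset.range (N+1))
      (fun j hj => by rw [hbig j (by simpa using hj)]; ring)]
  -- abbreviations
  have hc0 : 0 < α * lam := mul_pos hα0 hpos
  have hthinF : ∀ a i, thin a f i = Fs f N a i := fun a i => thin_eq_sum f (N+1) hbig a i
  set g : ℕ → ℝ := fun i => thin α (sizeBias f) i with hgdef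
  have hSf0 : ∀ j, N ≤ j → sizeBias f j = 0 := by
    intro j hj
    unfold sizeBias
    rw [hbig (j+1) (by omega)]
    ring
  have hSfnn : ∀ j, 0 ≤ sizeBias f j := by
    intro j
    unfold sizeBias
    rw [hlam]
    have := hfnn (j+1)
    positivity
  have hGg : ∀ i, Gs f N α i = lam * g i := by
    intro i
    rw [hgdef]
    simp only
    rw [thin_eq_sum (sizeBias f) N hSf0 α i, Finset.mul_sum, Gs, Finset.sum_range_succ']
    simp only [Nat.cast_zero, zero_mul, add_zero]
    refine Finset.sum_congr rfl (fun j _ => ?_)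
    unfold sizeBias
    rw [hlam]
    have e1 : j + 1 - 1 = j := by omega
    rw [e1]
    push_cast
    field_simp
  have hgnn : ∀ i, 0 ≤ g i := by
    intro i
    rw [hgdef]
    simp only
    rw [thin_eq_sum (sizeBias f) N hSf0 α i]
    refine Finset.sum_nonneg (fun j _ => ?_)
    have h1 := hSfnn j
    have h2 : (0:ℝ) ≤ 1 - α := by linarith
    positivity
  have hgN : ∀ i, N ≤ i → g i = 0 := fun i hi => thin_eq_zero _ N hSf0 α i hi
  have hFpos : ∀ i, i ≤ N → 0 < Fs f N α i := fun i hi => Fs_pos f N hfnn hfNpos α hα0 hα1 i hi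
  have hppos : ∀ i : ℕ, 0 < po (α * lam) i := fun i => po_pos_s10 hc0 i
  -- the logarithmic term
  set L : ℕ → ℝ := fun i => Real.log (Fs f N α i) -
      ((i:ℝ) * Real.log (α*lam) - α*lam - Real.log (Nat.factorial i)) with hLdef
  have hLlog : ∀ i, i ≤ N → L i = Real.log (Fs f N α i / po (α*lam) i) := by
    intro i hi
    rw [hLdef]
    simp only
    rw [Real.log_div (ne_of_gt (hFpos i hi)) (ne_of_gt (hppos i)), po_log hc0]
  -- derivative of each summand
  set d : ℕ → ℝ := fun i => Ds f N α i * L i +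
      (Ds f N α i - (i:ℝ)/α * Fs f N α i + lam * Fs f N α i) with hddef
  have hder : ∀ i ∈ Finset.range (N+1),
      HasDerivAt (fun a => Fs f N a i * (Real.log (Fs f N a i) -
        ((i:ℝ) * Real.log (a*lam) - a*lam - Real.log (Nat.factorial i)))) (d i) α := by
    intro i hi
    have hiN : i ≤ N := by have := Finset.mem_range.mp hi; omega
    have hFi := hasDerivAt_Fs f N α i
    have hFne : Fs f N α i ≠ 0 := ne_of_gt (hFpos i hiN)
    have h1 : HasDerivAt (fun a => Real.log (Fs f N a i)) (Ds f N α i / Fs f N α i) α :=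
      hFi.log hFne
    have h2 : HasDerivAt (fun a : ℝ => a * lam) lam α := hasDerivAt_mul_const lam
    have h3 : HasDerivAt (fun a : ℝ => Real.log (a * lam)) (lam / (α*lam)) α :=
      h2.log (ne_of_gt hc0)
    have h4 : HasDerivAt (fun a : ℝ => (i:ℝ) * Real.log (a*lam)) ((i:ℝ) * (lam/(α*lam))) α :=
      h3.const_mul _
    have h5 : HasDerivAt (fun a : ℝ => (i:ℝ) * Real.log (a*lam) - a*lam - Real.log (Nat.factorial i))
        ((i:ℝ)*(lam/(α*lam)) - lam) α := ((h4.sub h2).sub_const _)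
    have h7 := hFi.mul (h1.sub h5)
    refine h7.congr_deriv ?_
    symm
    rw [hddef]
    simp only [hLdef, Pi.sub_apply]
    field_simp
    ring
  have hDA : HasDerivAt (fun a => ∑ i ∈ Finset.range (N+1),
      Fs f N a i * (Real.log (Fs f N a i) -
        ((i:ℝ) * Real.log (a*lam) - a*lam - Real.log (Nat.factorial i))))
      (∑ i ∈ Finset.range (N+1), d i) α := HasDerivAt.fun_sum hder
  -- simplify the derivative value
  have hval : ∑ i ∈ Finset.range (N+1), d i = lam * KLr (thin α (sizeBias f)) (thin α f) := by
    have hsF : ∑ i ∈ Finset.range (N+1), Fs f N α i = 1 := by rw [sum_Fs]; exact hsum1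
    have hsiF : ∑ i ∈ Finset.range (N+1), (i:ℝ) * Fs f N α i = α * lam := by
      rw [sum_i_Fs, sum_Gs, hmean]
    have hstep2 : ∑ i ∈ Finset.range (N+1), d i
        = ∑ i ∈ Finset.range (N+1), Ds f N α i * L i := by
      have hsplit : ∀ i ∈ Finset.range (N+1), d i = Ds f N α i * L i +
          (Ds f N α i - (1/α) * ((i:ℝ) * Fs f N α i) + lam * Fs f N α i) := by
        intro i _
        rw [hddef]
        simp only
        field_simp
      calc ∑ i ∈ Finset.range (N+1), d i
          = ∑ i ∈ Finset.range (N+1), (Ds f N α i * L i +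
            (Ds f N α i - (1/α) * ((i:ℝ) * Fs f N α i) + lam * Fs f N α i)) :=
            Finset.sum_congr rfl hsplit
        _ = ∑ i ∈ Finset.range (N+1), Ds f N α i * L i := by
            rw [Finset.sum_add_distrib]
            have hz : ∑ i ∈ Finset.range (N+1),
                (Ds f N α i - (1/α) * ((i:ℝ) * Fs f N α i) + lam * Fs f N α i) = 0 := by
              rw [Finset.sum_add_distrib, Finset.sum_sub_distrib, ← Finset.mul_sum,
                ← Finset.mul_sum, sum_Ds, hsiF, hsF]
              field_simp
              ring
            rw [hz, add_zero]
    have habel : ∑ i ∈ Finset.range (N+1), Ds f N α i * L i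
        = ∑ i ∈ Finset.range N, Gs f N α i * (L (i+1) - L i) := by
      rw [Finset.sum_range_succ']
      have h1 : ∀ i ∈ Finset.range N, Ds f N α (i+1) * L (i+1)
          = Gs f N α i * (L (i+1) - L i) + (Gs f N α i * L i - Gs f N α (i+1) * L (i+1)) := by
        intro i _
        rw [Ds_succ_eq]
        ring
      rw [Finset.sum_congr rfl h1, Finset.sum_add_distrib,
        Finset.sum_range_sub' (fun i => Gs f N α i * L i) N, Gs_N, Ds_zero_eq]
      ring
    have hpoint : ∀ i ∈ Finset.range N, Gs f N α i * (L (i+1) - L i)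
        = lam * (g i * Real.log (g i / Fs f N α i)) := by
      intro i hi
      have hiN : i < N := Finset.mem_range.mp hi
      rcases eq_or_ne (g i) 0 with h0 | h0
      · rw [hGg i, h0]
        simp
      · have hgpos : 0 < g i := (hgnn i).lt_of_ne (Ne.symm h0)
        have h := Fs_succ_eq f N α i
        rw [hGg i] at h
        have hne : ((i:ℝ)+1) ≠ 0 := by positivity
        have hF1 : Fs f N α (i+1) = α * (lam * g i) / ((i:ℝ)+1) := by
          rw [eq_div_iff hne]
          linear_combination h
        have hp1 : po (α*lam) (i+1) = po (α*lam) i * (α*lam) / ((i:ℝ)+1) := po_succ _ i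
        have hFipos : 0 < Fs f N α i := hFpos i (by omega)
        have hpne : po (α*lam) i ≠ 0 := ne_of_gt (hppos i)
        have hratio : Fs f N α (i+1) / po (α*lam) (i+1) = g i / po (α*lam) i := by
          rw [hF1, hp1]
          field_simp
        rw [hLlog (i+1) (by omega), hLlog i (by omega), hratio, hGg i,
          Real.log_div (ne_of_gt hgpos) (ne_of_gt (hppos i)),
          Real.log_div (ne_of_gt hFipos) (ne_of_gt (hppos i)),
          Real.log_div (ne_of_gt hgpos) (ne_of_gt hFipos)]
        ring
    have hKLr : KLr (thin α (sizeBias f)) (thin α f)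
        = ∑ i ∈ Finset.range N, g i * Real.log (g i / Fs f N α i) := by
      unfold KLr
      rw [tsum_eq_sum (s := Finset.range N) (fun i hi => by
        have hz : g i = 0 := hgN i (by simpa using hi)
        have hz' : thin α (sizeBias f) i = 0 := hz
        rw [hz', zero_mul])]
      refine Finset.sum_congr rfl (fun i _ => ?_)
      rw [hthinF]
    rw [hstep2, habel, Finset.sum_congr rfl hpoint, ← Finset.mul_sum, hKLr]
  -- the function equals the finite sum near α
  have heq : (fun a : ℝ => KLr (thin a f) (po (a * lam))) =ᶠ[nhds α]
      (fun a => ∑ i ∈ Finset.range (N+1), Fs f N a i * (Real.log (Fs f N a i) -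
        ((i:ℝ) * Real.log (a*lam) - a*lam - Real.log (Nat.factorial i)))) := by
    filter_upwards [Ioo_mem_nhds hα0 hα1] with a ha
    obtain ⟨ha0, ha1⟩ := ha
    have hca : 0 < a * lam := mul_pos ha0 hpos
    unfold KLr
    rw [tsum_eq_sum (s := Finset.range (N+1)) (fun i hi => by
      rw [thin_eq_zero f (N+1) hbig a i (by simpa using hi)]; simp)]
    refine Finset.sum_congr rfl (fun i hi => ?_)
    have hiN : i ≤ N := by have := Finset.mem_range.mp hi; omega
    rw [hthinF]
    have hFp : 0 < Fs f N a i := Fs_pos f N hfnn hfNpos a ha0 ha1 i hiN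
    rw [Real.log_div (ne_of_gt hFp) (ne_of_gt (po_pos_s10 hca i)), po_log hca]
  exact hval ▸ hDA.congr_of_eventuallyEq heq
end
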